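/- arXiv:1110.1268 — 5 statements merged into one kernel-verified Lean document; each statement's English description precedes it below -/
import Mathlib

section
/- Let k ≥ 2 be an integer and let G be a non-complete connected simple graph on n vertices with minimum degree δ(G) ≥ n/2 − 1 + log_k(n). Then the rainbow connection number of G satisfies rc(G) ≤ k. -/
open SimpleGraph

/-- A graph `G` is rainbow connected under an edge-coloring `c` if every pair of
distinct vertices is joined by a path whose edges receive pairwise distinct colors. -/
def IsRainbowConnected {V α : Type*} (G : SimpleGraph V) (c : Sym2 V → α) : Prop :=
  ∀ u v : V, u ≠ v → ∃ p : G.Walk u v, p.IsPath ∧ (p.edges.map c).Nodup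

open Finset in
lemma card_bad_le (n k : ℕ) (S : Finset (Fin n)) (e1 e2 : Fin n → Sym2 (Fin n))
    (hinj : Set.InjOn e2 S)
    (hne : ∀ w ∈ S, ∀ w' ∈ S, e1 w ≠ e2 w') :
    (Finset.univ.filter
      (fun c : Sym2 (Fin n) → Fin k => ∀ w ∈ S, c (e1 w) = c (e2 w))).card
      ≤ k ^ (Fintype.card (Sym2 (Fin n)) - S.card) := by
  classical
  set T : Finset (Sym2 (Fin n)) := Finset.univ \ S.image e2 with hTdef
  have hTcard : T.card = Fintype.card (Sym2 (Fin n)) - S.card := by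
    rw [hTdef, Finset.card_sdiff_of_subset (Finset.subset_univ _), Finset.card_univ,
      Finset.card_image_of_injOn hinj]
  have hinj2 : Set.InjOn (fun c : Sym2 (Fin n) → Fin k => (fun t : T => c t.1))
      (Finset.univ.filter
        (fun c : Sym2 (Fin n) → Fin k => ∀ w ∈ S, c (e1 w) = c (e2 w))) := by
    intro c hc c' hc' hcc
    simp only [Finset.coe_filter, Set.mem_setOf_eq] at hc hc'
    funext e
    by_cases he : e ∈ T
    · exact congrFun hcc ⟨e, he⟩
    · have he' : e ∈ S.image e2 := by
        simp only [hTdef, Finset.mem_sdiff, Finset.mem_univ, true_and, not_not] at he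
        exact he
      obtain ⟨w, hw, rfl⟩ := Finset.mem_image.mp he'
      have h1 : e1 w ∈ T := by
        simp only [hTdef, Finset.mem_sdiff, Finset.mem_univ, true_and]
        intro hmem
        obtain ⟨w', hw', heq⟩ := Finset.mem_image.mp hmem
        exact hne w hw w' hw' heq.symm
      calc c (e2 w) = c (e1 w) := (hc.2 w hw).symm
        _ = c' (e1 w) := congrFun hcc ⟨e1 w, h1⟩
        _ = c' (e2 w) := hc'.2 w hw
  calc _ ≤ (Finset.univ : Finset (T → Fin k)).card :=
        Finset.card_le_card_of_injOn _ (fun c _ => Finset.mem_univ _) hinj2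
    _ = k ^ (Fintype.card (Sym2 (Fin n)) - S.card) := by
        rw [Finset.card_univ, Fintype.card_fun, Fintype.card_fin, Fintype.card_coe, hTcard]

/-- If `k ≥ 2` and `G` is a non-complete connected graph on `n` vertices with
minimum degree at least `n/2 - 1 + log_k n`, then `rc(G) ≤ k`, i.e. there is a
`k`-edge-coloring making `G` rainbow connected. -/
theorem rc_le_of_minDegree (k n : ℕ) (hk : 2 ≤ k) (G : SimpleGraph (Fin n))
    [DecidableRel G.Adj] (hnc : G ≠ ⊤) (hconn : G.Connected)
    (hδ : (n : ℝ) / 2 - 1 + Real.logb k n ≤ (G.minDegree : ℝ)) :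
    ∃ c : Sym2 (Fin n) → Fin k, IsRainbowConnected G c := by
  classical
  -- n ≥ 2
  have hn : 2 ≤ n := by
    by_contra h
    push_neg at h
    apply hnc
    ext x y
    have hxy : x = y := by
      apply Fin.ext
      omega
    simp [hxy]
  have hn0 : (0:ℝ) < n := by positivity
  have hk1 : (1:ℝ) < (k:ℝ) := by exact_mod_cast hk.trans_lt' one_lt_two
  set N := Fintype.card (Sym2 (Fin n)) with hN
  -- the set of bad pairs
  set P : Finset (Fin n × Fin n) :=
    Finset.univ.filter (fun p => p.1 ≠ p.2 ∧ ¬ G.Adj p.1 p.2) with hP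
  -- bad colorings for a pair
  set Bad : Fin n × Fin n → Finset (Sym2 (Fin n) → Fin k) := fun p =>
    Finset.univ.filter (fun c => ∀ w ∈ G.neighborFinset p.1 ∩ G.neighborFinset p.2,
      c s(p.1, w) = c s(w, p.2)) with hBad
  -- per-pair bound
  have key : ∀ p ∈ P, n ^ 2 * (Bad p).card ≤ k ^ N := by
    rintro ⟨u, v⟩ hp
    simp only [hP, Finset.mem_filter, Finset.mem_univ, true_and] at hp
    obtain ⟨huv, hadj⟩ := hp
    set S := G.neighborFinset u ∩ G.neighborFinset v with hS
    have hSmem : ∀ w ∈ S, G.Adj u w ∧ G.Adj v w := by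
      intro w hw
      simp only [hS, Finset.mem_inter, SimpleGraph.mem_neighborFinset] at hw
      exact hw
    -- distinctness of edges
    have hinj : Set.InjOn (fun w => s(w, v)) S := by
      intro w hw w' hw' heq
      simp only [Sym2.eq, Sym2.rel_iff', Prod.mk.injEq, Prod.swap_prod_mk] at heq
      rcases heq with ⟨h1, _⟩ | ⟨h1, h2⟩
      · exact h1
      · exact absurd h1 ((hSmem w (by exact_mod_cast hw)).2.ne')
    have hne : ∀ w ∈ S, ∀ w' ∈ S, s(u, w) ≠ s(w', v) := by
      intro w hw w' hw' heq
      simp only [Sym2.eq, Sym2.rel_iff', Prod.mk.injEq, Prod.swap_prod_mk] at heq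
      rcases heq with ⟨h1, h2⟩ | ⟨h1, h2⟩
      · exact (hSmem w' hw').1.ne h1
      · exact huv h1
    have hcardBad : (Bad (u, v)).card ≤ k ^ (N - S.card) := by
      have := card_bad_le n k S (fun w => s(u, w)) (fun w => s(w, v))
        (fun w hw w' hw' h => hinj (by exact_mod_cast hw) (by exact_mod_cast hw') h) hne
      exact this
    -- size of S
    have hcount : 2 * G.minDegree ≤ (n - 2) + S.card := by
      have h1 : (G.neighborFinset u ∪ G.neighborFinset v).card + S.card
          = G.degree u + G.degree v := by
        rw [hS, Finset.card_union_add_card_inter]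
        rfl
      have h2 : G.neighborFinset u ∪ G.neighborFinset v ⊆ Finset.univ \ {u, v} := by
        intro w hw
        simp only [Finset.mem_union, SimpleGraph.mem_neighborFinset] at hw
        simp only [Finset.mem_sdiff, Finset.mem_univ, true_and, Finset.mem_insert,
          Finset.mem_singleton]
        push_neg
        rcases hw with h | h
        · exact ⟨h.ne', fun hwv => hadj (hwv ▸ h)⟩
        · exact ⟨fun hwu => hadj ((hwu ▸ h).symm), h.ne'⟩
      have h3 : (Finset.univ \ ({u, v} : Finset (Fin n))).card = n - 2 := by
        rw [Finset.card_sdiff_of_subset (Finset.subset_univ _), Finset.card_univ, Fintype.card_fin,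
          Finset.card_insert_of_notMem (by simpa using huv), Finset.card_singleton]
      have h4 := Finset.card_le_card h2
      have h5 : G.minDegree ≤ G.degree u := G.minDegree_le_degree u
      have h6 : G.minDegree ≤ G.degree v := G.minDegree_le_degree v
      omega
    -- n^2 ≤ k^|S|
    have hlog : 2 * Real.logb k n ≤ (S.card : ℝ) := by
      have hc : ((n - 2 : ℕ) : ℝ) = (n : ℝ) - 2 := by
        push_cast [hn]
        ring
      have : ((2 * G.minDegree : ℕ) : ℝ) ≤ ((n - 2) + S.card : ℕ) := by exact_mod_cast hcount
      push_cast at this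
      rw [hc] at this
      nlinarith [hδ]
    have hpow : (n : ℝ) ^ 2 ≤ (k : ℝ) ^ (S.card : ℕ) := by
      have e1 : (n:ℝ)^2 = (k:ℝ) ^ (2 * Real.logb k n) := by
        rw [mul_comm, Real.rpow_mul (by positivity), Real.rpow_logb (by positivity)
          (ne_of_gt hk1) hn0, Real.rpow_two]
      rw [e1, ← Real.rpow_natCast (k:ℝ) S.card]
      exact Real.rpow_le_rpow_left_iff hk1 |>.mpr hlog
    have hpow' : n ^ 2 ≤ k ^ S.card := by exact_mod_cast hpow
    have hSN : S.card ≤ N := by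
      have : S.image (fun w => s(w, v)) ⊆ Finset.univ := Finset.subset_univ _
      have h := Finset.card_le_card this
      rwa [Finset.card_image_of_injOn hinj, Finset.card_univ] at h
    calc n ^ 2 * (Bad (u, v)).card ≤ k ^ S.card * k ^ (N - S.card) :=
          Nat.mul_le_mul hpow' hcardBad
      _ = k ^ N := by rw [← pow_add, Nat.add_sub_cancel' hSN]
  -- union bound
  have hsum : ∑ p ∈ P, (Bad p).card < k ^ N := by
    have h1 : n ^ 2 * ∑ p ∈ P, (Bad p).card ≤ P.card * k ^ N := by
      rw [Finset.mul_sum]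
      calc ∑ p ∈ P, n ^ 2 * (Bad p).card ≤ ∑ p ∈ P, k ^ N := Finset.sum_le_sum key
        _ = P.card * k ^ N := by rw [Finset.sum_const, smul_eq_mul]
    have h2 : P.card < n ^ 2 := by
      have hne : P ≠ Finset.univ := by
        intro habs
        have h00 : ((⟨0, by omega⟩ : Fin n), (⟨0, by omega⟩ : Fin n)) ∈ P := by
          rw [habs]; exact Finset.mem_univ _
        simp only [hP, Finset.mem_filter, Finset.mem_univ, true_and] at h00
        exact h00.1 rfl
      have hss : P ⊂ Finset.univ := Finset.ssubset_univ_iff.mpr hne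
      have := Finset.card_lt_card hss
      rwa [Finset.card_univ, Fintype.card_prod, Fintype.card_fin, ← sq] at this
    have hkN : 0 < k ^ N := Nat.pow_pos (by omega)
    have h3 : n ^ 2 * ∑ p ∈ P, (Bad p).card < n ^ 2 * k ^ N := by nlinarith
    exact Nat.lt_of_mul_lt_mul_left h3
  -- extract a good coloring
  have hgood : ∃ c : Sym2 (Fin n) → Fin k, ∀ p ∈ P, c ∉ Bad p := by
    by_contra h
    push_neg at h
    have hsub : (Finset.univ : Finset (Sym2 (Fin n) → Fin k)) ⊆ P.biUnion Bad := by
      intro c _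
      obtain ⟨p, hp, hcp⟩ := h c
      exact Finset.mem_biUnion.mpr ⟨p, hp, hcp⟩
    have := Finset.card_le_card hsub
    have h2 := Finset.card_biUnion_le (s := P) (t := Bad)
    rw [Finset.card_univ, Fintype.card_fun, Fintype.card_fin, ← hN] at this
    omega
  obtain ⟨c, hc⟩ := hgood
  refine ⟨c, fun u v huv => ?_⟩
  by_cases hadj : G.Adj u v
  · exact ⟨SimpleGraph.Walk.cons hadj SimpleGraph.Walk.nil, by simp [huv], by simp⟩
  · have hp : (u, v) ∈ P := by
      simp only [hP, Finset.mem_filter, Finset.mem_univ, true_and]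
      exact ⟨huv, hadj⟩
    have := hc (u, v) hp
    simp only [hBad, Finset.mem_filter, Finset.mem_univ, true_and, not_forall] at this
    obtain ⟨w, hw, hcne⟩ := this
    simp only [Finset.mem_inter, SimpleGraph.mem_neighborFinset] at hw
    obtain ⟨h1, h2⟩ := hw
    refine ⟨SimpleGraph.Walk.cons h1 (SimpleGraph.Walk.cons h2.symm SimpleGraph.Walk.nil),
      ?_, ?_⟩
    · simp [SimpleGraph.Walk.isPath_def, h1.ne, huv, h2.ne']
    · simp [hcne]
end

section
/- Let k ≥ 2 be an integer and let G be a non-complete connected simple graph on n vertices such that σ₂(G) ≥ n − 2 + 2·log_k(n), where σ₂(G) denotes the minimum of deg(u) + deg(v) over all pairs of distinct non-adjacent vertices u, v of G. Then rc(G) ≤ k. -/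
open SimpleGraph

/-- If `k ≥ 2` and `G` is a non-complete connected graph on `n` vertices whose
minimum degree-sum over pairs of distinct non-adjacent vertices satisfies
`σ₂(G) ≥ n - 2 + 2 log_k n`, then `rc(G) ≤ k`. -/
theorem rc_le_of_sigma_two (k n : ℕ) (hk : 2 ≤ k) (G : SimpleGraph (Fin n))
    [DecidableRel G.Adj] (hnc : G ≠ ⊤) (hconn : G.Connected)
    (hσ : ∀ u v : Fin n, u ≠ v → ¬ G.Adj u v →
      (n : ℝ) - 2 + 2 * Real.logb k n ≤ (G.degree u : ℝ) + (G.degree v : ℝ)) :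
    ∃ c : Sym2 (Fin n) → Fin k, IsRainbowConnected G c := by
  classical
  -- there is a non-adjacent pair of distinct vertices
  have hne0 : ∃ u v : Fin n, u ≠ v ∧ ¬ G.Adj u v := by
    by_contra h
    push_neg at h
    exact hnc (by
      ext u v
      simp only [top_adj]
      exact ⟨fun h' => h'.ne, fun hne => h u v hne⟩)
  obtain ⟨u0, v0, hu0v0, _⟩ := hne0
  have hn2 : 2 ≤ n := by
    have : Nontrivial (Fin n) := ⟨⟨u0, v0, hu0v0⟩⟩
    have h1 := Fintype.one_lt_card (α := Fin n)
    simp at h1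
    omega
  have hnR : (2:ℝ) ≤ (n:ℝ) := by exact_mod_cast hn2
  have hk1 : (1:ℝ) < (k:ℝ) := by exact_mod_cast lt_of_lt_of_le one_lt_two hk
  set N := Fintype.card (Sym2 (Fin n)) with hN
  set W : Fin n → Fin n → Finset (Fin n) :=
    fun u v => G.neighborFinset u ∩ G.neighborFinset v with hWdef
  set Bad : Fin n → Fin n → Finset (Sym2 (Fin n) → Fin k) :=
    fun u v => Finset.univ.filter (fun c => ∀ w ∈ W u v, c s(u, w) = c s(w, v)) with hBdef
  have hmemW : ∀ u v w : Fin n, w ∈ W u v → G.Adj u w ∧ G.Adj v w := by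
    intro u v w hw
    simp only [hWdef, Finset.mem_inter, mem_neighborFinset] at hw
    exact hw
  -- counting lemma (injection)
  have hcount : ∀ u v : Fin n, u ≠ v → ¬ G.Adj u v →
      (Bad u v).card * k ^ (W u v).card ≤ k ^ N := by
    intro u v huv hadj
    set F : (Sym2 (Fin n) → Fin k) × (↥(W u v) → Fin k) → (Sym2 (Fin n) → Fin k) :=
      fun p e => if h : ∃ w : ↥(W u v), e = s(u, (w : Fin n)) then p.2 h.choose else p.1 e
      with hF
    have hchoose : ∀ (w : ↥(W u v))
        (h : ∃ w' : ↥(W u v), s(u, (w : Fin n)) = s(u, (w' : Fin n))), h.choose = w := by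
      intro w h
      have hs := h.choose_spec
      have : (w : Fin n) = (h.choose : Fin n) := Sym2.congr_right.mp hs
      exact (Subtype.ext this).symm
    have hnotu : ∀ w : Fin n, w ∈ W u v →
        ¬ ∃ w' : ↥(W u v), s(w, v) = s(u, (w' : Fin n)) := by
      rintro w hw ⟨w', hw'⟩
      have hu : u ∈ s(w, v) := by rw [hw']; exact Sym2.mem_mk_left u _
      rcases Sym2.mem_iff.mp hu with h | h
      · exact (hmemW u v w hw).1.ne h
      · exact huv h
    have hinj : Set.InjOn F
        ((Bad u v) ×ˢ (Finset.univ : Finset (↥(W u v) → Fin k)) : Finset _) := by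
      intro p hp q hq hpq
      simp only [Finset.coe_product, Set.mem_prod, Finset.mem_coe] at hp hq
      have h2 : p.2 = q.2 := by
        funext w
        have he := congrFun hpq s(u, (w : Fin n))
        have hex : ∃ w' : ↥(W u v), s(u, (w : Fin n)) = s(u, (w' : Fin n)) := ⟨w, rfl⟩
        simp only [hF, dif_pos hex] at he
        rwa [hchoose w hex] at he
      have h1 : p.1 = q.1 := by
        funext e
        by_cases h : ∃ w' : ↥(W u v), e = s(u, (w' : Fin n))
        · obtain ⟨w, rfl⟩ := h
          have hpB : ∀ w' ∈ W u v, p.1 s(u, w') = p.1 s(w', v) :=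
            (Finset.mem_filter.mp hp.1).2
          have hqB : ∀ w' ∈ W u v, q.1 s(u, w') = q.1 s(w', v) :=
            (Finset.mem_filter.mp hq.1).2
          have e1 : F p s((w : Fin n), v) = p.1 s((w : Fin n), v) := by
            simp only [hF, dif_neg (hnotu (w : Fin n) w.2)]
          have e2 : F q s((w : Fin n), v) = q.1 s((w : Fin n), v) := by
            simp only [hF, dif_neg (hnotu (w : Fin n) w.2)]
          calc p.1 s(u, (w : Fin n)) = p.1 s((w : Fin n), v) := hpB _ w.2
            _ = F p s((w : Fin n), v) := e1.symm
            _ = F q s((w : Fin n), v) := by rw [hpq]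
            _ = q.1 s((w : Fin n), v) := e2
            _ = q.1 s(u, (w : Fin n)) := (hqB _ w.2).symm
        · have he := congrFun hpq e
          simp only [hF, dif_neg h] at he
          exact he
      exact Prod.ext h1 h2
    calc (Bad u v).card * k ^ (W u v).card
        = ((Bad u v) ×ˢ (Finset.univ : Finset (↥(W u v) → Fin k))).card := by
          rw [Finset.card_product, Finset.card_univ, Fintype.card_fun, Fintype.card_coe,
            Fintype.card_fin]
      _ ≤ (Finset.univ : Finset (Sym2 (Fin n) → Fin k)).card :=
          Finset.card_le_card_of_injOn F (fun a _ => Finset.mem_univ _) hinj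
      _ = k ^ N := by rw [Finset.card_univ, Fintype.card_fun, Fintype.card_fin, hN]
  -- the number of common neighbors is large
  have hkt : ∀ u v : Fin n, u ≠ v → ¬ G.Adj u v →
      ((n:ℝ))^2 ≤ (k:ℝ) ^ (W u v).card := by
    intro u v huv hadj
    have hsub : G.neighborFinset u ∪ G.neighborFinset v ⊆ Finset.univ \ {u, v} := by
      intro w hw
      simp only [Finset.mem_union, mem_neighborFinset] at hw
      simp only [Finset.mem_sdiff, Finset.mem_univ, Finset.mem_insert, Finset.mem_singleton,
        true_and]
      push_neg
      rcases hw with h | h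
      · exact ⟨fun e => G.irrefl (e ▸ h), fun e => hadj (e ▸ h)⟩
      · exact ⟨fun e => hadj (G.adj_symm (e ▸ h)), fun e => G.irrefl (e ▸ h)⟩
    have hucard : (G.neighborFinset u ∪ G.neighborFinset v).card ≤ n - 2 := by
      calc (G.neighborFinset u ∪ G.neighborFinset v).card
          ≤ (Finset.univ \ {u, v}).card := Finset.card_le_card hsub
        _ = n - 2 := by
            rw [Finset.card_sdiff_of_subset (Finset.subset_univ _), Finset.card_univ, Fintype.card_fin,
              Finset.card_pair huv]
    have hie : (G.neighborFinset u ∪ G.neighborFinset v).card + (W u v).card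
        = G.degree u + G.degree v := Finset.card_union_add_card_inter _ _
    have ht : 2 * Real.logb k n ≤ ((W u v).card : ℝ) := by
      have h1 : (G.degree u : ℝ) + (G.degree v : ℝ) ≤ ((n:ℝ) - 2) + ((W u v).card : ℝ) := by
        have hc : ((n - 2 : ℕ) : ℝ) = (n:ℝ) - 2 := by
          rw [Nat.cast_sub hn2]; norm_num
        have := hie
        have h2 : (G.degree u : ℝ) + (G.degree v : ℝ)
            = ((G.neighborFinset u ∪ G.neighborFinset v).card : ℝ) + ((W u v).card : ℝ) := by
          exact_mod_cast (congrArg (Nat.cast : ℕ → ℝ) this).symm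
        rw [h2, ← hc]
        have : ((G.neighborFinset u ∪ G.neighborFinset v).card : ℝ) ≤ ((n - 2 : ℕ) : ℝ) := by
          exact_mod_cast hucard
        linarith
      have := hσ u v huv hadj
      linarith
    have hn0 : (0:ℝ) < (n:ℝ) := by linarith
    have hk0 : (0:ℝ) < (k:ℝ) := by linarith
    have h1 : ((n:ℝ))^2 = ((k:ℝ) ^ (Real.logb k n)) ^ (2:ℕ) := by
      rw [Real.rpow_logb hk0 (ne_of_gt hk1) hn0]
    rw [h1, ← Real.rpow_natCast ((k:ℝ) ^ (Real.logb k n)) 2, ← Real.rpow_mul (le_of_lt hk0)]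
    have h2 : (k:ℝ) ^ (Real.logb k n * (2:ℕ)) ≤ (k:ℝ) ^ (((W u v).card : ℕ) : ℝ) := by
      apply (Real.rpow_le_rpow_left_iff hk1).mpr
      push_cast
      linarith
    calc (k:ℝ) ^ (Real.logb k n * (2:ℕ)) ≤ (k:ℝ) ^ (((W u v).card : ℕ) : ℝ) := h2
      _ = (k:ℝ) ^ (W u v).card := Real.rpow_natCast _ _
  -- union bound
  set P : Finset (Fin n × Fin n) :=
    Finset.univ.filter (fun p => p.1 ≠ p.2 ∧ ¬ G.Adj p.1 p.2) with hPdef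
  set TB : Finset (Sym2 (Fin n) → Fin k) := P.biUnion (fun p => Bad p.1 p.2) with hTBdef
  have hn2pos : (0:ℝ) < (n:ℝ)^2 := by positivity
  have hTB : TB.card < k ^ N := by
    have h1 : TB.card ≤ ∑ p ∈ P, (Bad p.1 p.2).card := Finset.card_biUnion_le
    have h2 : ∀ p ∈ P, ((Bad p.1 p.2).card : ℝ) ≤ (k:ℝ)^N / (n:ℝ)^2 := by
      intro p hp
      obtain ⟨hne, hadj⟩ := (Finset.mem_filter.mp hp).2
      rw [le_div_iff₀ hn2pos]
      calc ((Bad p.1 p.2).card : ℝ) * (n:ℝ)^2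
          ≤ ((Bad p.1 p.2).card : ℝ) * (k:ℝ) ^ (W p.1 p.2).card :=
            mul_le_mul_of_nonneg_left (hkt p.1 p.2 hne hadj) (Nat.cast_nonneg _)
        _ ≤ (k:ℝ)^N := by exact_mod_cast hcount p.1 p.2 hne hadj
    have hP : (P.card : ℝ) < (n:ℝ)^2 := by
      have hss : P ⊂ Finset.univ := by
        rw [Finset.ssubset_univ_iff]
        intro hPu
        have hmem : (u0, u0) ∈ P := hPu ▸ Finset.mem_univ _
        simp [hPdef] at hmem
      have := Finset.card_lt_card hss
      rw [Finset.card_univ, Fintype.card_prod, Fintype.card_fin] at this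
      have : (P.card : ℝ) < (n:ℝ) * (n:ℝ) := by exact_mod_cast this
      nlinarith
    have hkN0 : (0:ℝ) < (k:ℝ)^N := by positivity
    have h3 : (TB.card : ℝ) < (k:ℝ)^N := by
      calc (TB.card : ℝ) ≤ ∑ p ∈ P, ((Bad p.1 p.2).card : ℝ) := by exact_mod_cast h1
        _ ≤ ∑ _p ∈ P, (k:ℝ)^N / (n:ℝ)^2 := Finset.sum_le_sum h2
        _ = (P.card : ℝ) * ((k:ℝ)^N / (n:ℝ)^2) := by
            rw [Finset.sum_const, nsmul_eq_mul]
        _ < (n:ℝ)^2 * ((k:ℝ)^N / (n:ℝ)^2) :=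
            mul_lt_mul_of_pos_right hP (div_pos hkN0 hn2pos)
        _ = (k:ℝ)^N := by field_simp
    exact_mod_cast h3
  -- pick a good coloring
  have hTBne : TB ≠ Finset.univ := by
    intro h
    have := hTB
    rw [h, Finset.card_univ, Fintype.card_fun, Fintype.card_fin, ← hN] at this
    exact lt_irrefl _ this
  have hex : ∃ c : Sym2 (Fin n) → Fin k, c ∉ TB := by
    by_contra h
    push_neg at h
    exact hTBne (Finset.eq_univ_iff_forall.mpr h)
  obtain ⟨c, hc⟩ := hex
  refine ⟨c, ?_⟩
  intro u v huv
  by_cases hadj : G.Adj u v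
  · refine ⟨(Path.singleton hadj : G.Path u v), (Path.singleton hadj).2, ?_⟩
    simp [Path.singleton]
  · have hcB : c ∉ Bad u v := by
      intro hmem
      exact hc (Finset.mem_biUnion.mpr ⟨(u, v),
        Finset.mem_filter.mpr ⟨Finset.mem_univ _, huv, hadj⟩, hmem⟩)
    have hex2 : ∃ w ∈ W u v, c s(u, w) ≠ c s(w, v) := by
      by_contra h
      push_neg at h
      exact hcB (Finset.mem_filter.mpr ⟨Finset.mem_univ _, h⟩)
    obtain ⟨w, hwW, hcc⟩ := hex2
    obtain ⟨huw, hvw⟩ := hmemW u v w hwW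
    refine ⟨Walk.cons huw (Walk.cons hvw.symm Walk.nil), ?_, ?_⟩
    · simp [Walk.isPath_def, huv, huw.ne', hvw.ne, hvw.ne', huw.ne]
    · simp [hcc]
end

section
/- Let k ≥ 3 be an integer and let G be a non-complete connected bipartite simple graph on n vertices, with bipartition classes X and Y, such that any two distinct vertices lying in the same class have at least 2·log_{k²/(3k−2)}(k)·log_k(n) common neighbors in the other class. Then rc(G) ≤ k. -/
open SimpleGraph Finset


lemma badpair_card (k : ℕ) (a : Fin k) :
    Fintype.card {p : Fin k × Fin k // p.1 = p.2 ∨ p.1 = a ∨ p.2 = a} ≤ 3 * k - 2 := by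
  classical
  rw [Fintype.card_subtype]
  have hk1 : 1 ≤ k := a.pos
  set A : Finset (Fin k × Fin k) := ({a} : Finset (Fin k)) ×ˢ univ with hA
  set B : Finset (Fin k × Fin k) := (univ.erase a).image fun x => (x, a) with hB
  set C : Finset (Fin k × Fin k) := (univ.erase a).image fun x => (x, x) with hC
  have hsub : (univ.filter fun p : Fin k × Fin k => p.1 = p.2 ∨ p.1 = a ∨ p.2 = a)
      ⊆ A ∪ B ∪ C := by
    intro p hp
    obtain ⟨p1, p2⟩ := p
    simp only [mem_filter, mem_univ, true_and] at hp
    by_cases h1 : p1 = a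
    · exact mem_union_left _ (mem_union_left _
        (mem_product.mpr ⟨mem_singleton.mpr h1, mem_univ _⟩))
    · rcases hp with h | h | h
      · subst h
        exact mem_union_right _
          (mem_image.mpr ⟨p1, mem_erase.mpr ⟨h1, mem_univ _⟩, rfl⟩)
      · exact absurd h h1
      · subst h
        exact mem_union_left _ (mem_union_right _
          (mem_image.mpr ⟨p1, mem_erase.mpr ⟨h1, mem_univ _⟩, rfl⟩))
  have h1 : A.card = k := by simp [hA]
  have h2 : B.card ≤ k - 1 := (card_image_le).trans (by simp [card_erase_of_mem])
  have h3 : C.card ≤ k - 1 := (card_image_le).trans (by simp [card_erase_of_mem])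
  have h4 : (A ∪ B ∪ C).card ≤ A.card + B.card + C.card :=
    (card_union_le _ _).trans (by gcongr; exact card_union_le _ _)
  have h5 := card_le_card hsub
  omega

def piSubEquiv {β : Type*} (T : ℕ) (P : β → Prop) :
    {b : Fin T → β // ∀ i, P (b i)} ≃ (Fin T → {x // P x}) where
  toFun b i := ⟨b.1 i, b.2 i⟩
  invFun g := ⟨fun i => (g i).1, fun i => (g i).2⟩
  left_inv _ := rfl
  right_inv _ := rfl

lemma count_bad (n k T : ℕ)
    (e f : Fin T → Sym2 (Fin n)) (g : Sym2 (Fin n))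
    (he : Function.Injective e) (hf : Function.Injective f)
    (hef : ∀ i j, e i ≠ f j) (hge : ∀ i, g ≠ e i) (hgf : ∀ i, g ≠ f i) :
    (univ.filter fun c : Sym2 (Fin n) → Fin k =>
        ∀ i, c (e i) = c (f i) ∨ c (e i) = c g ∨ c (f i) = c g).card * (k ^ 2) ^ T * k
      ≤ (3 * k - 2) ^ T * k ^ (Fintype.card (Sym2 (Fin n)) + 1) := by
  classical
  set M := Fintype.card (Sym2 (Fin n)) with hM
  set D : Finset (Sym2 (Fin n)) := (Finset.image e univ ∪ Finset.image f univ) ∪ {g} with hD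
  have hDe : ∀ i, e i ∈ D := fun i =>
    mem_union_left _ (mem_union_left _ (mem_image_of_mem _ (mem_univ i)))
  have hDf : ∀ i, f i ∈ D := fun i =>
    mem_union_left _ (mem_union_right _ (mem_image_of_mem _ (mem_univ i)))
  have hDg : g ∈ D := mem_union_right _ (mem_singleton_self g)
  have hd1 : Disjoint (Finset.image e univ) (Finset.image f univ) := by
    rw [Finset.disjoint_left]
    rintro x hx hy
    obtain ⟨i, -, rfl⟩ := mem_image.mp hx
    obtain ⟨j, -, hj⟩ := mem_image.mp hy
    exact hef i j hj.symm
  have hd2 : Disjoint (Finset.image e univ ∪ Finset.image f univ) ({g} : Finset (Sym2 (Fin n))) := by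
    rw [disjoint_right]
    intro x hx hy
    rw [mem_singleton] at hx
    subst hx
    rcases mem_union.mp hy with h | h
    · obtain ⟨i, -, hi⟩ := mem_image.mp h
      exact hge i hi.symm
    · obtain ⟨i, -, hi⟩ := mem_image.mp h
      exact hgf i hi.symm
  have hcardD : D.card = 2 * T + 1 := by
    rw [hD, card_union_of_disjoint hd2, card_union_of_disjoint hd1,
      card_image_of_injective _ he, card_image_of_injective _ hf, card_univ, Fintype.card_fin,
      card_singleton]
    ring
  have h2T : 2 * T + 1 ≤ M := by
    rw [← hcardD, hM, ← card_univ]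
    exact card_le_univ D
  set Q : Finset (Fin k × (Fin T → Fin k × Fin k)) :=
    univ.filter (fun q => ∀ i, (q.2 i).1 = (q.2 i).2 ∨ (q.2 i).1 = q.1 ∨ (q.2 i).2 = q.1)
    with hQ
  -- injection step
  have hinj : (univ.filter fun c : Sym2 (Fin n) → Fin k =>
        ∀ i, c (e i) = c (f i) ∨ c (e i) = c g ∨ c (f i) = c g).card
      ≤ (Q ×ˢ (univ : Finset ({x : Sym2 (Fin n) // x ∉ D} → Fin k))).card := by
    apply card_le_card_of_injOn
      (fun c => ((c g, fun i => (c (e i), c (f i))), fun x : {x : Sym2 (Fin n) // x ∉ D} => c x.1))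
    · intro c hc
      rw [mem_coe, mem_filter] at hc
      rw [mem_coe, mem_product, hQ, mem_filter]
      exact ⟨⟨mem_univ _, hc.2⟩, mem_univ _⟩
    · intro c _ c' _ hcc
      simp only [Prod.mk.injEq] at hcc
      obtain ⟨⟨hg', hef'⟩, hrest⟩ := hcc
      funext x
      by_cases hx : x ∈ D
      · rw [hD, mem_union, mem_union, mem_singleton] at hx
        rcases hx with (h | h) | h
        · obtain ⟨i, -, rfl⟩ := mem_image.mp h
          exact congrArg Prod.fst (congrFun hef' i)
        · obtain ⟨i, -, rfl⟩ := mem_image.mp h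
          exact congrArg Prod.snd (congrFun hef' i)
        · subst h; exact hg'
      · exact congrFun hrest ⟨x, hx⟩
  -- card of target
  have hQcard : Q.card ≤ k * (3 * k - 2) ^ T := by
    have e1 : Q.card = Fintype.card {q : Fin k × (Fin T → Fin k × Fin k) //
        ∀ i, (q.2 i).1 = (q.2 i).2 ∨ (q.2 i).1 = q.1 ∨ (q.2 i).2 = q.1} :=
      (Fintype.card_subtype _).symm
    have e2 : Fintype.card {q : Fin k × (Fin T → Fin k × Fin k) //
        ∀ i, (q.2 i).1 = (q.2 i).2 ∨ (q.2 i).1 = q.1 ∨ (q.2 i).2 = q.1}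
        = ∑ a : Fin k, Fintype.card {b : Fin T → Fin k × Fin k //
            ∀ i, (b i).1 = (b i).2 ∨ (b i).1 = a ∨ (b i).2 = a} := by
      rw [Fintype.card_congr (Equiv.subtypeProdEquivSigmaSubtype
        (fun (a : Fin k) (b : Fin T → Fin k × Fin k) =>
          ∀ i, (b i).1 = (b i).2 ∨ (b i).1 = a ∨ (b i).2 = a))]
      rw [Fintype.card_sigma]
    rw [e1, e2]
    calc ∑ a : Fin k, Fintype.card {b : Fin T → Fin k × Fin k //
            ∀ i, (b i).1 = (b i).2 ∨ (b i).1 = a ∨ (b i).2 = a}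
        ≤ ∑ _a : Fin k, (3 * k - 2) ^ T := by
          apply Finset.sum_le_sum
          intro a _
          rw [Fintype.card_congr (piSubEquiv T
            (fun p : Fin k × Fin k => p.1 = p.2 ∨ p.1 = a ∨ p.2 = a))]
          rw [Fintype.card_fun, Fintype.card_fin]
          exact Nat.pow_le_pow_left (badpair_card k a) T
      _ = k * (3 * k - 2) ^ T := by simp [mul_comm]
  have htarget : (Q ×ˢ (univ : Finset ({x : Sym2 (Fin n) // x ∉ D} → Fin k))).card
      = Q.card * k ^ (M - (2 * T + 1)) := by
    rw [card_product, card_univ, Fintype.card_fun, Fintype.card_fin,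
      Fintype.card_subtype_compl, Fintype.card_coe, hcardD]
  calc (univ.filter fun c : Sym2 (Fin n) → Fin k =>
        ∀ i, c (e i) = c (f i) ∨ c (e i) = c g ∨ c (f i) = c g).card * (k ^ 2) ^ T * k
      ≤ (Q.card * k ^ (M - (2 * T + 1))) * (k ^ 2) ^ T * k := by
        rw [← htarget]; exact Nat.mul_le_mul_right _ (Nat.mul_le_mul_right _ hinj)
    _ ≤ ((k * (3 * k - 2) ^ T) * k ^ (M - (2 * T + 1))) * (k ^ 2) ^ T * k := by
        exact Nat.mul_le_mul_right _ (Nat.mul_le_mul_right _ (Nat.mul_le_mul_right _ hQcard))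
    _ = (3 * k - 2) ^ T * (k ^ (M - (2 * T + 1)) * k ^ (2 * T + 1) * k) := by
        rw [← pow_mul]
        ring_nf
    _ = (3 * k - 2) ^ T * k ^ (M + 1) := by
        rw [← pow_add, Nat.sub_add_cancel h2T, ← pow_succ]

lemma analytic_key (k n T : ℕ) (hk : 3 ≤ k) (hn : 2 ≤ n)
    (hT : 2 * Real.logb ((k : ℝ) ^ 2 / (3 * (k : ℝ) - 2)) k * Real.logb k n ≤ (T : ℝ)) :
    ((n : ℝ)) ^ 2 * (3 * (k : ℝ) - 2) ^ T ≤ ((k : ℝ) ^ 2) ^ T := by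
  have hk3 : (3 : ℝ) ≤ (k : ℝ) := by exact_mod_cast hk
  have hn2 : (2 : ℝ) ≤ (n : ℝ) := by exact_mod_cast hn
  have hden : (0 : ℝ) < 3 * (k : ℝ) - 2 := by linarith
  set b : ℝ := (k : ℝ) ^ 2 / (3 * (k : ℝ) - 2) with hb
  have hb1 : 1 < b := by
    rw [hb, lt_div_iff₀ hden]
    nlinarith
  have hbpos : 0 < b := lt_trans one_pos hb1
  have hlogb : 0 < Real.log b := Real.log_pos hb1
  have hlogk : 0 < Real.log k := Real.log_pos (by linarith)
  have hlogn : 0 < Real.log n := Real.log_pos (by linarith)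
  -- b ^ t = n ^ 2 where t is the log expression
  set t : ℝ := 2 * Real.logb b k * Real.logb k n with ht
  have hbt : b ^ t = (n : ℝ) ^ 2 := by
    rw [Real.rpow_def_of_pos hbpos]
    have : Real.log b * t = 2 * Real.log n := by
      rw [ht, Real.logb, Real.logb]
      field_simp
    rw [this]
    have h2 : (2 : ℝ) * Real.log n = Real.log n + Real.log n := by ring
    rw [h2, Real.exp_add, Real.exp_log (by linarith : (0:ℝ) < (n:ℝ))]
    ring
  -- n^2 ≤ b ^ T
  have hnT : ((n : ℝ)) ^ 2 ≤ b ^ (T : ℕ) := by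
    have h1 : b ^ t ≤ b ^ ((T : ℕ) : ℝ) :=
      Real.rpow_le_rpow_of_exponent_le (le_of_lt hb1) hT
    rw [Real.rpow_natCast] at h1
    rw [← hbt]
    exact h1
  calc ((n : ℝ)) ^ 2 * (3 * (k : ℝ) - 2) ^ T
      ≤ b ^ T * (3 * (k : ℝ) - 2) ^ T := by
        apply mul_le_mul_of_nonneg_right hnT (by positivity)
    _ = ((k : ℝ) ^ 2) ^ T := by
        rw [← mul_pow, hb, div_mul_cancel₀ _ (ne_of_gt hden)]


lemma choose_inj {α : Type*} [LinearOrder α] (Z : Finset α) (T : ℕ) (h : T ≤ Z.card) :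
    ∃ z : Fin T → α, Function.Injective z ∧ ∀ i, z i ∈ Z := by
  refine ⟨fun i => (Z.orderIsoOfFin rfl (Fin.castLE h i) : α), ?_, fun i =>
    (Z.orderIsoOfFin rfl (Fin.castLE h i)).2⟩
  intro i j hij
  have h1 : Z.orderIsoOfFin rfl (Fin.castLE h i) = Z.orderIsoOfFin rfl (Fin.castLE h j) :=
    Subtype.coe_injective hij
  have h2 := (Z.orderIsoOfFin rfl).injective h1
  exact Fin.castLE_injective h h2

lemma same_class_main {n k T : ℕ} (G : SimpleGraph (Fin n)) [DecidableRel G.Adj]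
    (u v : Fin n) (huv : u ≠ v) (Z : Finset (Fin n))
    (hZsub : Z ⊆ G.neighborFinset u ∩ G.neighborFinset v) (hZcard : T ≤ Z.card) :
    ∃ (e f : Fin T → Sym2 (Fin n)) (g : Sym2 (Fin n)),
      Function.Injective e ∧ Function.Injective f ∧ (∀ i j, e i ≠ f j) ∧
      (∀ i, g ≠ e i) ∧ (∀ i, g ≠ f i) ∧
      ∀ c : Sym2 (Fin n) → Fin k,
        (¬ ∃ p : G.Walk u v, p.IsPath ∧ (p.edges.map c).Nodup) →
        ∀ i, c (e i) = c (f i) ∨ c (e i) = c g ∨ c (f i) = c g := by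
  classical
  obtain ⟨z, hzinj, hzmem⟩ := choose_inj Z T hZcard
  have hadju : ∀ i, G.Adj u (z i) := fun i =>
    (SimpleGraph.mem_neighborFinset _ _ _).mp (mem_inter.mp (hZsub (hzmem i))).1
  have hadjv : ∀ i, G.Adj v (z i) := fun i =>
    (SimpleGraph.mem_neighborFinset _ _ _).mp (mem_inter.mp (hZsub (hzmem i))).2
  have hzu : ∀ i, z i ≠ u := fun i => ((hadju i).ne).symm
  have hzv : ∀ i, z i ≠ v := fun i => ((hadjv i).ne).symm
  refine ⟨fun i => s(u, z i), fun i => s(z i, v), s(u, v), ?_, ?_, ?_, ?_, ?_, ?_⟩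
  · intro i j hij
    rw [Sym2.eq_iff] at hij
    rcases hij with ⟨-, h⟩ | ⟨h1, h2⟩
    · exact hzinj h
    · exact hzinj (by rw [← h1, h2])
  · intro i j hij
    rw [Sym2.eq_iff] at hij
    rcases hij with ⟨h, -⟩ | ⟨h1, h2⟩
    · exact hzinj h
    · exact absurd h1 (hzv i)
  · intro i j hij
    rw [Sym2.eq_iff] at hij
    rcases hij with ⟨h1, h2⟩ | ⟨h1, h2⟩
    · exact hzv i h2
    · exact huv h1
  · intro i hg
    rw [Sym2.eq_iff] at hg
    rcases hg with ⟨-, h⟩ | ⟨h1, -⟩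
    · exact hzv i h.symm
    · exact hzu i h1.symm
  · intro i hg
    rw [Sym2.eq_iff] at hg
    rcases hg with ⟨h, -⟩ | ⟨-, h⟩
    · exact hzu i h.symm
    · exact hzv i h.symm
  · intro c hc i
    left
    by_contra hne
    apply hc
    refine ⟨Walk.cons (hadju i) (Walk.cons ((hadjv i).symm) Walk.nil), ?_, ?_⟩
    · refine Walk.IsPath.cons (Walk.IsPath.cons Walk.IsPath.nil ?_) ?_
      · simp [hzv i]
      · simp [Ne.symm (hzu i), huv]
    · simp [hne]

lemma cross_main {n k T : ℕ} (G : SimpleGraph (Fin n)) [DecidableRel G.Adj]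
    (u v w : Fin n) (huv : u ≠ v) (hadj : ¬ G.Adj u v)
    (hwv : G.Adj w v) (hwu : w ≠ u) (Z : Finset (Fin n))
    (hZsub : Z ⊆ G.neighborFinset u ∩ G.neighborFinset w) (hZcard : T ≤ Z.card) :
    ∃ (e f : Fin T → Sym2 (Fin n)) (g : Sym2 (Fin n)),
      Function.Injective e ∧ Function.Injective f ∧ (∀ i j, e i ≠ f j) ∧
      (∀ i, g ≠ e i) ∧ (∀ i, g ≠ f i) ∧
      ∀ c : Sym2 (Fin n) → Fin k,
        (¬ ∃ p : G.Walk u v, p.IsPath ∧ (p.edges.map c).Nodup) →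
        ∀ i, c (e i) = c (f i) ∨ c (e i) = c g ∨ c (f i) = c g := by
  classical
  obtain ⟨z, hzinj, hzmem⟩ := choose_inj Z T hZcard
  have hadju : ∀ i, G.Adj u (z i) := fun i =>
    (SimpleGraph.mem_neighborFinset _ _ _).mp (mem_inter.mp (hZsub (hzmem i))).1
  have hadjw : ∀ i, G.Adj w (z i) := fun i =>
    (SimpleGraph.mem_neighborFinset _ _ _).mp (mem_inter.mp (hZsub (hzmem i))).2
  have hzu : ∀ i, z i ≠ u := fun i => ((hadju i).ne).symm
  have hzw : ∀ i, z i ≠ w := fun i => ((hadjw i).ne).symm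
  have hzv : ∀ i, z i ≠ v := by
    intro i hzi
    exact hadj (hzi ▸ hadju i)
  have hwv' : w ≠ v := hwv.ne
  refine ⟨fun i => s(u, z i), fun i => s(z i, w), s(w, v), ?_, ?_, ?_, ?_, ?_, ?_⟩
  · intro i j hij
    rw [Sym2.eq_iff] at hij
    rcases hij with ⟨-, h⟩ | ⟨h1, h2⟩
    · exact hzinj h
    · exact hzinj (by rw [← h1, h2])
  · intro i j hij
    rw [Sym2.eq_iff] at hij
    rcases hij with ⟨h, -⟩ | ⟨h1, h2⟩
    · exact hzinj h
    · exact absurd h1 (hzw i)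
  · intro i j hij
    rw [Sym2.eq_iff] at hij
    rcases hij with ⟨h1, h2⟩ | ⟨h1, h2⟩
    · exact hzu j h1.symm
    · exact hwu h1.symm
  · intro i hg
    rw [Sym2.eq_iff] at hg
    rcases hg with ⟨h1, -⟩ | ⟨h1, h2⟩
    · exact hwu h1
    · exact hzw i h1.symm
  · intro i hg
    rw [Sym2.eq_iff] at hg
    rcases hg with ⟨h1, -⟩ | ⟨-, h⟩
    · exact hzw i h1.symm
    · exact hzv i h.symm
  · intro c hc i
    by_contra hne
    push_neg at hne
    obtain ⟨h1, h2, h3⟩ := hne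
    apply hc
    refine ⟨Walk.cons (hadju i) (Walk.cons ((hadjw i).symm) (Walk.cons hwv Walk.nil)), ?_, ?_⟩
    · refine Walk.IsPath.cons (Walk.IsPath.cons (Walk.IsPath.cons Walk.IsPath.nil ?_) ?_) ?_
      · simp [hwv']
      · simp [hzw i, hzv i]
      · simp [Ne.symm (hzu i), Ne.symm hwu, huv]
    · simp [h1, h2, h3]

lemma real_step (k n M T A : ℕ) (hk : 3 ≤ k) (hn : 2 ≤ n)
    (hT : 2 * Real.logb ((k : ℝ) ^ 2 / (3 * (k : ℝ) - 2)) k * Real.logb k n ≤ (T : ℝ))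
    (hcard : A * (k ^ 2) ^ T * k ≤ (3 * k - 2) ^ T * k ^ (M + 1)) :
    (A : ℝ) * (n : ℝ) ^ 2 ≤ (k : ℝ) ^ M := by
  have hkR : (3 : ℝ) ≤ (k : ℝ) := by exact_mod_cast hk
  have h32 : ((3 * k - 2 : ℕ) : ℝ) = 3 * (k : ℝ) - 2 := by
    have h2 : (2 : ℕ) ≤ 3 * k := by omega
    push_cast [Nat.cast_sub h2]
    ring
  have hcardR : (A : ℝ) * ((k : ℝ) ^ 2) ^ T * (k : ℝ)
      ≤ (3 * (k : ℝ) - 2) ^ T * (k : ℝ) ^ (M + 1) := by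
    rw [← h32]
    exact_mod_cast hcard
  have hanal := analytic_key k n T hk hn hT
  have hFpos : (0 : ℝ) < (3 * (k : ℝ) - 2) ^ T * (k : ℝ) := by
    apply mul_pos (pow_pos (by linarith) T) (by linarith)
  have hchain : (A : ℝ) * (n : ℝ) ^ 2 * ((3 * (k : ℝ) - 2) ^ T * (k : ℝ))
      ≤ (k : ℝ) ^ M * ((3 * (k : ℝ) - 2) ^ T * (k : ℝ)) := by
    calc (A : ℝ) * (n : ℝ) ^ 2 * ((3 * (k : ℝ) - 2) ^ T * (k : ℝ))
        = (A : ℝ) * ((n : ℝ) ^ 2 * (3 * (k : ℝ) - 2) ^ T) * (k : ℝ) := by ring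
      _ ≤ (A : ℝ) * ((k : ℝ) ^ 2) ^ T * (k : ℝ) := by
          have hA0 : (0 : ℝ) ≤ (A : ℝ) := Nat.cast_nonneg A
          have hk0' : (0 : ℝ) ≤ (k : ℝ) := Nat.cast_nonneg k
          gcongr
      _ ≤ (3 * (k : ℝ) - 2) ^ T * (k : ℝ) ^ (M + 1) := hcardR
      _ = (k : ℝ) ^ M * ((3 * (k : ℝ) - 2) ^ T * (k : ℝ)) := by
          rw [pow_succ]; ring
  exact le_of_mul_le_mul_right hchain hFpos

/-- If `k ≥ 3` and `G` is a non-complete connected bipartite graph on `n` vertices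
with bipartition classes `X`, `Y` such that any two distinct vertices in the same
class have at least `2 · log_{k²/(3k-2)}(k) · log_k(n)` common neighbors in the
other class, then `rc(G) ≤ k`. -/
theorem rc_le_of_bipartite (k n : ℕ) (hk : 3 ≤ k) (G : SimpleGraph (Fin n))
    [DecidableRel G.Adj] (hnc : G ≠ ⊤) (hconn : G.Connected)
    (X Y : Finset (Fin n))
    (hpart : ∀ w : Fin n, w ∈ X ↔ w ∉ Y)
    (hbip : ∀ a b : Fin n, G.Adj a b → (a ∈ X ∧ b ∈ Y) ∨ (a ∈ Y ∧ b ∈ X))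
    (hX : ∀ u ∈ X, ∀ v ∈ X, u ≠ v →
      2 * Real.logb ((k : ℝ) ^ 2 / (3 * (k : ℝ) - 2)) k * Real.logb k n ≤
        (((G.neighborFinset u ∩ G.neighborFinset v).filter (· ∈ Y)).card : ℝ))
    (hY : ∀ u ∈ Y, ∀ v ∈ Y, u ≠ v →
      2 * Real.logb ((k : ℝ) ^ 2 / (3 * (k : ℝ) - 2)) k * Real.logb k n ≤
        (((G.neighborFinset u ∩ G.neighborFinset v).filter (· ∈ X)).card : ℝ)) :
    ∃ c : Sym2 (Fin n) → Fin k, IsRainbowConnected G c := by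
  classical
  -- n ≥ 2
  have hn2 : 2 ≤ n := by
    by_contra h
    push_neg at h
    apply hnc
    ext a b
    have hab : a = b := by
      have := a.isLt; have := b.isLt
      exact Fin.ext (by omega)
    subst hab
    simp
  have hk0 : 0 < k := by omega
  set t : ℝ := 2 * Real.logb ((k : ℝ) ^ 2 / (3 * (k : ℝ) - 2)) k * Real.logb k n with htdef
  set T : ℕ := ⌈t⌉₊ with hTdef
  have htT : t ≤ (T : ℝ) := Nat.le_ceil t
  set M : ℕ := Fintype.card (Sym2 (Fin n)) with hM
  -- the key per-pair bound
  have key : ∀ u v : Fin n, u ≠ v →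
      ((univ.filter fun c : Sym2 (Fin n) → Fin k =>
          ¬ ∃ p : G.Walk u v, p.IsPath ∧ (p.edges.map c).Nodup).card : ℝ) * (n : ℝ) ^ 2
        ≤ (k : ℝ) ^ M := by
    intro u v huv
    by_cases hadj : G.Adj u v
    · have hzero : (univ.filter fun c : Sym2 (Fin n) → Fin k =>
          ¬ ∃ p : G.Walk u v, p.IsPath ∧ (p.edges.map c).Nodup).card = 0 := by
        rw [card_eq_zero, filter_eq_empty_iff]
        intro c _
        push_neg
        refine ⟨Walk.cons hadj Walk.nil, ?_, ?_⟩
        · simp [Walk.cons_isPath_iff, huv]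
        · simp
      rw [hzero]
      simp
    · -- build e, f, g
      have hmain : ∃ (e f : Fin T → Sym2 (Fin n)) (g : Sym2 (Fin n)),
          Function.Injective e ∧ Function.Injective f ∧ (∀ i j, e i ≠ f j) ∧
          (∀ i, g ≠ e i) ∧ (∀ i, g ≠ f i) ∧
          ∀ c : Sym2 (Fin n) → Fin k,
            (¬ ∃ p : G.Walk u v, p.IsPath ∧ (p.edges.map c).Nodup) →
            ∀ i, c (e i) = c (f i) ∨ c (e i) = c g ∨ c (f i) = c g := by
        -- find a neighbor of v
        have hwex : ∃ w : Fin n, G.Adj w v := by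
          obtain ⟨p⟩ := hconn v u
          cases p with
          | nil => exact absurd rfl huv.symm
          | cons h q => exact ⟨_, h.symm⟩
        by_cases hu : u ∈ Y <;> by_cases hv : v ∈ Y
        · -- both in Y
          have hcard := hY u hu v hv huv
          exact same_class_main G u v huv _ (filter_subset _ _) (Nat.ceil_le.mpr hcard)
        · -- u ∈ Y, v ∈ X : cross
          obtain ⟨w, hwv⟩ := hwex
          have hwY : w ∈ Y := by
            rcases hbip w v hwv with ⟨hw1, hv1⟩ | ⟨hw1, hv1⟩
            · exact absurd hv1 hv
            · exact hw1
          have hwu : w ≠ u := by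
            intro hweq
            exact hadj (hweq ▸ hwv)
          have hcard := hY u hu w hwY (Ne.symm hwu)
          exact cross_main G u v w huv hadj hwv hwu _ (filter_subset _ _)
            (Nat.ceil_le.mpr hcard)
        · -- u ∈ X, v ∈ Y : cross
          have huX : u ∈ X := (hpart u).mpr hu
          obtain ⟨w, hwv⟩ := hwex
          have hwX : w ∈ X := by
            rcases hbip w v hwv with ⟨hw1, hv1⟩ | ⟨hw1, hv1⟩
            · exact hw1
            · exact absurd hv ((hpart v).mp hv1)
          have hwu : w ≠ u := by
            intro hweq
            exact hadj (hweq ▸ hwv)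
          have hcard := hX u huX w hwX (Ne.symm hwu)
          exact cross_main G u v w huv hadj hwv hwu _ (filter_subset _ _)
            (Nat.ceil_le.mpr hcard)
        · -- both in X
          have huX : u ∈ X := (hpart u).mpr hu
          have hvX : v ∈ X := (hpart v).mpr hv
          have hcard := hX u huX v hvX huv
          exact same_class_main G u v huv _ (filter_subset _ _) (Nat.ceil_le.mpr hcard)
      obtain ⟨e, f, g, he, hf, hef, hge, hgf, hsub⟩ := hmain
      have hsubset : (univ.filter fun c : Sym2 (Fin n) → Fin k =>
            ¬ ∃ p : G.Walk u v, p.IsPath ∧ (p.edges.map c).Nodup)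
          ⊆ (univ.filter fun c : Sym2 (Fin n) → Fin k =>
            ∀ i, c (e i) = c (f i) ∨ c (e i) = c g ∨ c (f i) = c g) := by
        intro c hc
        rw [mem_filter] at hc ⊢
        exact ⟨mem_univ _, hsub c hc.2⟩
      have hcount := count_bad n k T e f g he hf hef hge hgf
      have hcard : (univ.filter fun c : Sym2 (Fin n) → Fin k =>
            ¬ ∃ p : G.Walk u v, p.IsPath ∧ (p.edges.map c).Nodup).card * (k ^ 2) ^ T * k
          ≤ (3 * k - 2) ^ T * k ^ (M + 1) := by
        refine le_trans ?_ hcount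
        exact Nat.mul_le_mul_right _ (Nat.mul_le_mul_right _ (card_le_card hsubset))
      exact real_step k n M T _ hk hn2 htT hcard
  -- final union bound
  set Bad : Fin n × Fin n → Finset (Sym2 (Fin n) → Fin k) := fun p =>
    univ.filter fun c => ¬ ∃ q : G.Walk p.1 p.2, q.IsPath ∧ (q.edges.map c).Nodup with hBad
  set P : Finset (Fin n × Fin n) := univ.filter fun p => p.1 ≠ p.2 with hP
  have hPcard : P.card < n ^ 2 := by
    have hss : P ⊂ univ := by
      rw [ssubset_univ_iff]
      intro hPuniv
      have : ((⟨0, by omega⟩ : Fin n), (⟨0, by omega⟩ : Fin n)) ∈ P := hPuniv ▸ mem_univ _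
      rw [hP, mem_filter] at this
      exact this.2 rfl
    have := card_lt_card hss
    rwa [card_univ, Fintype.card_prod, Fintype.card_fin, ← sq] at this
  have hnR : (0 : ℝ) < (n : ℝ) ^ 2 := by
    have : (0 : ℕ) < n := by omega
    positivity
  have hunion : (P.biUnion Bad).card < Fintype.card (Sym2 (Fin n) → Fin k) := by
    have hcardfun : Fintype.card (Sym2 (Fin n) → Fin k) = k ^ M := by
      rw [Fintype.card_fun, Fintype.card_fin, hM]
    rw [hcardfun]
    have hR : ((P.biUnion Bad).card : ℝ) < ((k : ℝ) ^ M) := by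
      calc ((P.biUnion Bad).card : ℝ)
          ≤ ∑ p ∈ P, ((Bad p).card : ℝ) := by
            exact_mod_cast Nat.cast_le.mpr (card_biUnion_le)
        _ ≤ ∑ _p ∈ P, ((k : ℝ) ^ M / (n : ℝ) ^ 2) := by
            apply Finset.sum_le_sum
            intro p hp
            rw [hP, mem_filter] at hp
            have := key p.1 p.2 hp.2
            rw [le_div_iff₀ hnR]
            exact this
        _ = P.card * ((k : ℝ) ^ M / (n : ℝ) ^ 2) := by
            rw [Finset.sum_const, nsmul_eq_mul]
        _ < (n : ℝ) ^ 2 * ((k : ℝ) ^ M / (n : ℝ) ^ 2) := by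
            apply mul_lt_mul_of_pos_right
            · exact_mod_cast hPcard
            · positivity
        _ = (k : ℝ) ^ M := by field_simp
    exact_mod_cast hR
  have hnotall : ∃ c : Sym2 (Fin n) → Fin k, c ∉ P.biUnion Bad := by
    by_contra h
    push_neg at h
    have : P.biUnion Bad = univ := eq_univ_iff_forall.mpr h
    rw [this, card_univ] at hunion
    exact lt_irrefl _ hunion
  obtain ⟨c, hc⟩ := hnotall
  refine ⟨c, fun u v huv => ?_⟩
  by_contra hbad
  apply hc
  rw [mem_biUnion]
  refine ⟨(u, v), ?_, ?_⟩
  · rw [hP, mem_filter]; exact ⟨mem_univ _, huv⟩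
  · rw [hBad, mem_filter]
    exact ⟨mem_univ _, hbad⟩
end

section
/- Let k ≥ 3 be an integer and let G be a simple graph on n vertices with diameter 2 and minimum degree δ(G) ≥ 2·(1 + log_{k²/(3k−2)}(k))·log_k(n). Then rc(G) ≤ k. -/
open SimpleGraph

section Aux

open Finset

private lemma card_filter_forall' {ι β : Type*} [Fintype ι] [DecidableEq ι] [Fintype β]
    [DecidableEq β] (Q : ι → β → Prop) [∀ w q, Decidable (Q w q)] :
    (Finset.univ.filter fun f : ι → β => ∀ w, Q w (f w)).card
      = ∏ w : ι, (Finset.univ.filter fun q => Q w q).card := by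
  rw [← Fintype.card_subtype]
  rw [Fintype.card_congr (Equiv.subtypePiEquivPi (p := Q))]
  rw [Fintype.card_pi]
  congr 1
  ext w
  rw [Fintype.card_subtype]

private lemma count_bad' {E : Type*} [Fintype E] [DecidableEq E] {ι : Type*} [Fintype ι]
    [DecidableEq ι]
    (k M : ℕ) (hk : 0 < k) (a b : ι → E)
    (Q : ι → Fin k → Fin k → (E → Fin k) → Prop) [∀ w x y c, Decidable (Q w x y c)]
    (ha : Function.Injective a) (hb : Function.Injective b)
    (hab : ∀ w w', a w ≠ b w')
    (hQdep : ∀ w x y c c', (∀ e, (∀ w', e ≠ a w' ∧ e ≠ b w') → c e = c' e) →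
      Q w x y c → Q w x y c')
    (hM : ∀ w (c : E → Fin k),
      (Finset.univ.filter fun q : Fin k × Fin k => Q w q.1 q.2 c).card ≤ M) :
    (Finset.univ.filter fun c : E → Fin k => ∀ w, Q w (c (a w)) (c (b w)) c).card
      ≤ M ^ (Fintype.card ι) * k ^ (Fintype.card E - 2 * Fintype.card ι) := by
  classical
  set p : E → Prop := fun e => ∃ w, e = a w ∨ e = b w with hp
  have hcardp : Fintype.card {e // p e} = 2 * Fintype.card ι := by
    have h1 : (Finset.univ.filter p) = (Finset.univ.image a) ∪ (Finset.univ.image b) := by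
      ext e
      simp [hp, or_and_right, exists_or, eq_comm]
    rw [Fintype.card_subtype, h1, card_union_of_disjoint, card_image_of_injective _ ha,
      card_image_of_injective _ hb]
    · rw [card_univ]; ring
    · rw [Finset.disjoint_left]
      rintro e he1 he2
      simp only [mem_image, mem_univ, true_and] at he1 he2
      obtain ⟨w, rfl⟩ := he1
      obtain ⟨w', hw'⟩ := he2
      exact hab w w' hw'.symm
  have hcardR : Fintype.card {e // ¬ p e} = Fintype.card E - 2 * Fintype.card ι := by
    rw [Fintype.card_subtype_compl, hcardp]
  set ext : ({e // ¬ p e} → Fin k) → E → Fin k :=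
    fun r e => if h : p e then ⟨0, hk⟩ else r ⟨e, h⟩ with hext
  set Φ : (E → Fin k) → (ι → Fin k × Fin k) × ({e // ¬ p e} → Fin k) :=
    fun c => (fun w => (c (a w), c (b w)), fun e => c e.1) with hΦ
  set T : Finset ((ι → Fin k × Fin k) × ({e // ¬ p e} → Fin k)) :=
    Finset.univ.filter (fun pr => ∀ w, Q w (pr.1 w).1 (pr.1 w).2 (ext pr.2)) with hT
  have step1 : (Finset.univ.filter fun c : E → Fin k => ∀ w, Q w (c (a w)) (c (b w)) c).card
      ≤ T.card := by
    apply Finset.card_le_card_of_injOn Φ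
    · intro c hc
      simp only [Finset.mem_coe, mem_filter, mem_univ, true_and] at hc
      simp only [Finset.mem_coe, hT, hΦ, mem_filter, mem_univ, true_and]
      intro w
      refine hQdep w _ _ c _ ?_ (hc w)
      intro e he
      have hpe : ¬ p e := by
        rintro ⟨w', hw'⟩
        rcases hw' with h' | h'
        · exact (he w').1 h'
        · exact (he w').2 h'
      simp [hext, hpe]
    · intro c₁ _ c₂ _ h
      funext e
      by_cases hpe : p e
      · obtain ⟨w, hw | hw⟩ := hpe
        · subst hw
          have := congrArg (fun z => (z.1 w).1) h
          simpa [hΦ] using this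
        · subst hw
          have := congrArg (fun z => (z.1 w).2) h
          simpa [hΦ] using this
      · have := congrArg (fun z => z.2 ⟨e, hpe⟩) h
        simpa [hΦ] using this
  have step2 : T.card ≤ M ^ (Fintype.card ι) * k ^ (Fintype.card {e // ¬ p e}) := by
    have hfib : T.card = ∑ r : {e // ¬ p e} → Fin k,
        ((Finset.univ.filter fun f : ι → Fin k × Fin k =>
          ∀ w, Q w (f w).1 (f w).2 (ext r)).card) := by
      rw [Finset.card_eq_sum_card_fiberwise (f := Prod.snd) (t := Finset.univ)
        (fun x _ => mem_univ _)]
      apply Finset.sum_congr rfl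
      intro r _
      apply Finset.card_nbij (fun pr => pr.1)
      · intro pr hpr
        simp only [Finset.mem_coe, hT, mem_filter, mem_univ, true_and] at hpr ⊢
        obtain ⟨h1, h2⟩ := hpr
        subst h2
        exact h1
      · intro p1 hp1 p2 hp2 h
        simp only [Finset.coe_filter, Set.mem_setOf_eq, hT, mem_filter, mem_univ,
          true_and] at hp1 hp2
        exact Prod.ext h (hp1.2.trans hp2.2.symm)
      · intro f hf
        simp only [Finset.coe_filter, Set.mem_setOf_eq, mem_univ, true_and] at hf
        refine ⟨(f, r), ?_, rfl⟩
        simp only [Finset.coe_filter, Set.mem_setOf_eq, hT, mem_filter, mem_univ, true_and]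
        exact ⟨hf, trivial⟩
    rw [hfib]
    calc ∑ r : {e // ¬ p e} → Fin k, ((Finset.univ.filter fun f : ι → Fin k × Fin k =>
          ∀ w, Q w (f w).1 (f w).2 (ext r)).card)
        ≤ ∑ _r : {e // ¬ p e} → Fin k, M ^ (Fintype.card ι) := by
          apply Finset.sum_le_sum
          intro r _
          refine le_trans (le_of_eq
            (card_filter_forall' (fun w (q : Fin k × Fin k) => Q w q.1 q.2 (ext r)))) ?_
          calc ∏ w : ι, (Finset.univ.filter fun q : Fin k × Fin k => Q w q.1 q.2 (ext r)).card
              ≤ ∏ _w : ι, M := Finset.prod_le_prod' (fun w _ => hM w (ext r))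
            _ = M ^ (Fintype.card ι) := by rw [Finset.prod_const, card_univ]
      _ = M ^ (Fintype.card ι) * k ^ (Fintype.card {e // ¬ p e}) := by
          rw [Finset.sum_const, card_univ, Fintype.card_fun, Fintype.card_fin, smul_eq_mul,
            mul_comm]
  rw [← hcardR]
  exact step1.trans step2

private lemma card_diag_le' (k : ℕ) :
    (Finset.univ.filter fun q : Fin k × Fin k => q.1 = q.2).card ≤ k := by
  calc (Finset.univ.filter fun q : Fin k × Fin k => q.1 = q.2).card
      ≤ (Finset.univ : Finset (Fin k)).card := by
        apply Finset.card_le_card_of_injOn (fun q => q.1) (fun q _ => mem_univ _)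
        intro q1 h1 q2 h2 h
        simp only [Finset.coe_filter, Set.mem_setOf_eq] at h1 h2
        have h' : q1.1 = q2.1 := h
        exact Prod.ext h' (by rw [← h1.2, ← h2.2]; exact h')
    _ = k := by simp

private lemma card_bad_triple_le' (k : ℕ) (z : Fin k) :
    (Finset.univ.filter fun q : Fin k × Fin k =>
      q.1 = q.2 ∨ q.1 = z ∨ q.2 = z).card ≤ 3 * k - 2 := by
  classical
  have hk : 1 ≤ k := z.pos
  have hsub : (Finset.univ.filter fun q : Fin k × Fin k => q.1 = q.2 ∨ q.1 = z ∨ q.2 = z)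
      ⊆ (Finset.univ.filter fun q : Fin k × Fin k => q.1 = q.2)
        ∪ (Finset.univ.filter fun q : Fin k × Fin k => q.1 = z ∧ q.2 ≠ z)
        ∪ (Finset.univ.filter fun q : Fin k × Fin k => q.2 = z ∧ q.1 ≠ z) := by
    intro q hq
    simp only [mem_filter, mem_univ, true_and, mem_union] at hq ⊢
    rcases hq with h | h | h
    · exact Or.inl (Or.inl h)
    · by_cases h2 : q.2 = z
      · exact Or.inl (Or.inl (h.trans h2.symm))
      · exact Or.inl (Or.inr ⟨h, h2⟩)
    · by_cases h1 : q.1 = z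
      · exact Or.inl (Or.inl (h1.trans h.symm))
      · exact Or.inr ⟨h, h1⟩
  have hB : (Finset.univ.filter fun q : Fin k × Fin k => q.1 = z ∧ q.2 ≠ z).card ≤ k - 1 := by
    calc _ ≤ ((Finset.univ : Finset (Fin k)).erase z).card := by
          apply Finset.card_le_card_of_injOn (fun q => q.2)
          · intro q hq
            simp only [Finset.mem_coe, mem_filter, mem_univ, true_and] at hq
            exact Finset.mem_erase.mpr ⟨hq.2, mem_univ _⟩
          · intro q1 h1 q2 h2 h
            simp only [Finset.coe_filter, Set.mem_setOf_eq] at h1 h2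
            exact Prod.ext (h1.2.1.trans h2.2.1.symm) h
      _ = k - 1 := by simp
  have hC : (Finset.univ.filter fun q : Fin k × Fin k => q.2 = z ∧ q.1 ≠ z).card ≤ k - 1 := by
    calc _ ≤ ((Finset.univ : Finset (Fin k)).erase z).card := by
          apply Finset.card_le_card_of_injOn (fun q => q.1)
          · intro q hq
            simp only [Finset.mem_coe, mem_filter, mem_univ, true_and] at hq
            exact Finset.mem_erase.mpr ⟨hq.2, mem_univ _⟩
          · intro q1 h1 q2 h2 h
            simp only [Finset.coe_filter, Set.mem_setOf_eq] at h1 h2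
            exact Prod.ext h (h1.2.1.trans h2.2.1.symm)
      _ = k - 1 := by simp
  calc (Finset.univ.filter fun q : Fin k × Fin k => q.1 = q.2 ∨ q.1 = z ∨ q.2 = z).card
      ≤ _ := Finset.card_le_card hsub
    _ ≤ _ + _ := Finset.card_union_le _ _
    _ ≤ (k + (k-1)) + (k-1) :=
        Nat.add_le_add (le_trans (Finset.card_union_le _ _)
          (Nat.add_le_add (card_diag_le' k) hB)) hC
    _ ≤ 3 * k - 2 := by omega

private lemma rainbow_path2' {V : Type*} {G : SimpleGraph V} {u w v : V} {α : Type*}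
    (h1 : G.Adj u w) (h2 : G.Adj w v) (huv : u ≠ v) (c : Sym2 V → α)
    (hc : c s(u,w) ≠ c s(w,v)) :
    ∃ p : G.Walk u v, p.IsPath ∧ (p.edges.map c).Nodup := by
  refine ⟨.cons h1 (.cons h2 .nil), ?_, ?_⟩
  · simp [Walk.isPath_def, h1.ne, h2.ne, huv]
  · simp [hc]

private lemma rainbow_path3' {V : Type*} {G : SimpleGraph V} {u w x v : V} {α : Type*}
    (h1 : G.Adj u w) (h2 : G.Adj w x) (h3 : G.Adj x v)
    (hux : u ≠ x) (huv : u ≠ v) (hwv : w ≠ v) (c : Sym2 V → α)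
    (hc1 : c s(u,w) ≠ c s(w,x)) (hc2 : c s(u,w) ≠ c s(x,v)) (hc3 : c s(w,x) ≠ c s(x,v)) :
    ∃ p : G.Walk u v, p.IsPath ∧ (p.edges.map c).Nodup := by
  refine ⟨.cons h1 (.cons h2 (.cons h3 .nil)), ?_, ?_⟩
  · simp [Walk.isPath_def, h1.ne, h2.ne, h3.ne, hux, huv, hwv]
  · simp [hc1, hc2, hc3]

private lemma rainbow_path1' {V : Type*} {G : SimpleGraph V} {u v : V} {α : Type*}
    (h : G.Adj u v) (c : Sym2 V → α) :
    ∃ p : G.Walk u v, p.IsPath ∧ (p.edges.map c).Nodup := by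
  refine ⟨.cons h .nil, ?_, ?_⟩
  · simp [Walk.isPath_def, h.ne]
  · simp

private lemma common_neighbor' {n : ℕ} {G : SimpleGraph (Fin n)} (hdiam : G.diam = 2)
    {u v : Fin n} (hne : u ≠ v) (hadj : ¬ G.Adj u v) :
    ∃ x, G.Adj u x ∧ G.Adj x v := by
  have hnt : G.ediam ≠ ⊤ := by
    intro h
    rw [SimpleGraph.diam, h] at hdiam
    simp at hdiam
  have hreach : G.Reachable u v := by
    apply SimpleGraph.reachable_of_edist_ne_top
    intro h
    exact hnt (eq_top_iff.mpr (h ▸ SimpleGraph.edist_le_ediam))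
  have hd2 : G.dist u v = 2 := by
    have hle : G.dist u v ≤ 2 := hdiam ▸ SimpleGraph.dist_le_diam hnt
    have h0 : G.dist u v ≠ 0 := by
      rw [SimpleGraph.dist_ne_zero_iff_ne_and_reachable]
      exact ⟨hne, hreach⟩
    have h1 : G.dist u v ≠ 1 := fun h => hadj (SimpleGraph.dist_eq_one_iff_adj.mp h)
    omega
  obtain ⟨p, hp⟩ := hreach.exists_walk_length_eq_dist
  rw [hd2] at hp
  cases p with
  | nil => simp at hp
  | cons h q =>
    cases q with
    | nil => simp at hp
    | cons h' q' =>
      simp only [SimpleGraph.Walk.length_cons, add_eq_right,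
        Nat.succ_eq_add_one] at hp
      have hq' : q'.length = 0 := by omega
      have := SimpleGraph.Walk.eq_of_length_eq_zero hq'
      subst this
      exact ⟨_, h, h'⟩

private lemma two_mul_card_le' {E ι : Type*} [Fintype E] [Fintype ι] (a b : ι → E)
    (ha : Function.Injective a) (hb : Function.Injective b)
    (hab : ∀ w w', a w ≠ b w') : 2 * Fintype.card ι ≤ Fintype.card E := by
  have hinj : Function.Injective (Sum.elim a b) := by
    intro s1 s2 h
    cases s1 with
    | inl w => cases s2 with
      | inl w' => simp only [Sum.elim_inl] at h; rw [ha h]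
      | inr w' => exact absurd h (hab w w')
    | inr w => cases s2 with
      | inl w' => exact absurd h.symm (hab w' w)
      | inr w' => simp only [Sum.elim_inr] at h; rw [hb h]
  have := Fintype.card_le_of_injective _ hinj
  simpa [Fintype.card_sum, two_mul] using this

private lemma nat_id1 (a N : ℕ) (h : 2*a ≤ N) : a + (N - 2*a + a) = N := by omega

private lemma nat_id2 (a N : ℕ) (h : 2*a ≤ N) : N - 2*a + 2*a = N := by omega

private lemma nat_id3 (k : ℕ) (h : 3 ≤ k) : 2 ≤ 3*k := by omega

end Aux

/-- If `k ≥ 3` and `G` is a graph on `n` vertices of diameter `2` with minimum degree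
at least `2 · (1 + log_{k²/(3k-2)}(k)) · log_k(n)`, then `rc(G) ≤ k`. -/
theorem rc_le_of_diam_two (k n : ℕ) (hk : 3 ≤ k) (G : SimpleGraph (Fin n))
    [DecidableRel G.Adj] (hdiam : G.diam = 2)
    (hδ : 2 * (1 + Real.logb ((k : ℝ) ^ 2 / (3 * (k : ℝ) - 2)) k) * Real.logb k n ≤
      (G.minDegree : ℝ)) :
    ∃ c : Sym2 (Fin n) → Fin k, IsRainbowConnected G c := by
  classical
  open Finset in
  have hk0 : 0 < k := by omega
  have hk1 : (1:ℝ) < k := by exact_mod_cast (by omega : 1 < k)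
  have hkR0 : (0:ℝ) < k := by positivity
  have hn2 : 2 ≤ n := by
    have : Nontrivial (Fin n) := nontrivial_of_diam_ne_zero (by rw [hdiam]; omega)
    exact Fin.nontrivial_iff_two_le.mp this
  have hn0 : (0:ℝ) < n := by
    have : 0 < n := by omega
    exact_mod_cast this
  set bR : ℝ := (k:ℝ)^2 / (3*(k:ℝ) - 2) with hbR
  have h3k2 : (0:ℝ) < 3*(k:ℝ) - 2 := by
    have : (3:ℝ) ≤ k := by exact_mod_cast hk
    linarith
  have hb1 : 1 < bR := by
    rw [hbR, lt_div_iff₀ h3k2]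
    have : (3:ℝ) ≤ k := by exact_mod_cast hk
    nlinarith
  set δ := G.minDegree with hδdef
  have hδ' : 2 * Real.logb k n + 2 * Real.logb bR n ≤ (δ:ℝ) := by
    have hident : Real.logb bR k * Real.logb k n = Real.logb bR n := by
      have hlogk : Real.log k ≠ 0 := ne_of_gt (Real.log_pos hk1)
      rw [Real.logb, Real.logb, Real.logb]
      field_simp
    calc 2 * Real.logb k n + 2 * Real.logb bR n
        = 2 * (1 + Real.logb bR k) * Real.logb k n := by rw [← hident]; ring
      _ ≤ (δ:ℝ) := hδ
  -- common neighbor choice function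
  set cn : Fin n → Fin n → Fin n := fun a bb =>
    if h : ∃ x, G.Adj a x ∧ G.Adj x bb then h.choose else a with hcn
  have hcn_spec : ∀ a bb, a ≠ bb → ¬ G.Adj a bb →
      G.Adj a (cn a bb) ∧ G.Adj (cn a bb) bb := by
    intro a bb hne hnadj
    have h := common_neighbor' hdiam hne hnadj
    rw [hcn]
    simp only [dif_pos h]
    exact h.choose_spec
  set N := Fintype.card (Sym2 (Fin n)) with hN
  set CS : Fin n → Fin n → Finset (Fin n) :=
    fun u v => G.neighborFinset u ∩ G.neighborFinset v with hCS
  set WS : Fin n → Fin n → Finset (Fin n) :=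
    fun u v => G.neighborFinset u \ G.neighborFinset v with hWS
  set B : Fin n × Fin n → Finset (Sym2 (Fin n) → Fin k) := fun p =>
    if 2 * Real.logb k n ≤ ((CS p.1 p.2).card : ℝ) then
      Finset.univ.filter (fun c => ∀ w ∈ CS p.1 p.2, c s(p.1, w) = c s(w, p.2))
    else
      Finset.univ.filter (fun c => ∀ w ∈ WS p.1 p.2,
        c s(p.1, w) = c s(w, cn w p.2) ∨ c s(p.1, w) = c s(cn w p.2, p.2)
          ∨ c s(w, cn w p.2) = c s(cn w p.2, p.2)) with hB
  set P : Finset (Fin n × Fin n) :=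
    Finset.univ.filter (fun p => p.1 ≠ p.2 ∧ ¬ G.Adj p.1 p.2) with hP
  -- facts about members of CS and WS
  have hCfacts : ∀ u v : Fin n, ∀ w ∈ CS u v, G.Adj u w ∧ G.Adj w v := by
    intro u v w hw
    rw [hCS] at hw
    simp only [Finset.mem_inter, SimpleGraph.mem_neighborFinset] at hw
    exact ⟨hw.1, hw.2.symm⟩
  have hWfacts : ∀ u v : Fin n, ¬ G.Adj u v → u ≠ v → ∀ w ∈ WS u v,
      G.Adj u w ∧ w ≠ v ∧ ¬ G.Adj w v ∧ G.Adj w (cn w v) ∧ G.Adj (cn w v) v ∧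
        cn w v ≠ u := by
    intro u v hnadj hne w hw
    rw [hWS] at hw
    simp only [Finset.mem_sdiff, SimpleGraph.mem_neighborFinset] at hw
    have hadj_uw : G.Adj u w := hw.1
    have hwv : w ≠ v := by
      rintro rfl
      exact hnadj hadj_uw
    have hnadj_wv : ¬ G.Adj w v := fun h => hw.2 h.symm
    obtain ⟨h1, h2⟩ := hcn_spec w v hwv hnadj_wv
    refine ⟨hadj_uw, hwv, hnadj_wv, h1, h2, ?_⟩
    rintro rfl
    exact hnadj h2
  have claimA : ∀ p ∈ P, ((B p).card : ℝ) ≤ (k:ℝ)^N / (n:ℝ)^2 := by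
    intro p hp
    obtain ⟨u, v⟩ := p
    rw [hP] at hp
    simp only [Finset.mem_filter, Finset.mem_univ, true_and] at hp
    obtain ⟨hne, hnadj⟩ := hp
    rw [hB]
    beta_reduce
    by_cases hm : 2 * Real.logb k n ≤ (((CS (u,v).1 (u,v).2).card : ℝ))
    · rw [if_pos hm]
      have hCadj : ∀ w : ↥(CS u v), G.Adj u w.1 ∧ G.Adj w.1 v := fun w => hCfacts u v w.1 w.2
      have ha : Function.Injective (fun w : ↥(CS u v) => s(u, (w.1 : Fin n))) := by
        intro w1 w2 h
        simp only [Sym2.eq_iff] at h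
        rcases h with ⟨-, h⟩ | ⟨h1, h2⟩
        · exact Subtype.ext h
        · exact absurd h2.symm (hCadj w1).1.ne
      have hb : Function.Injective (fun w : ↥(CS u v) => s((w.1 : Fin n), v)) := by
        intro w1 w2 h
        simp only [Sym2.eq_iff] at h
        rcases h with ⟨h, -⟩ | ⟨h1, h2⟩
        · exact Subtype.ext h
        · exact absurd h1 (hCadj w1).2.ne
      have hab : ∀ w w' : ↥(CS u v), s(u, (w.1 : Fin n)) ≠ s((w'.1 : Fin n), v) := by
        intro w w' h
        rw [Sym2.eq_iff] at h
        rcases h with ⟨h1, -⟩ | ⟨h1, -⟩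
        · exact absurd h1 (hCadj w').1.ne
        · exact hne h1
      have hcount := count_bad' (E := Sym2 (Fin n)) (ι := ↥(CS u v)) k k hk0
        (fun w => s(u, (w.1 : Fin n))) (fun w => s((w.1 : Fin n), v))
        (fun _ x y _ => x = y) ha hb hab
        (fun _ _ _ _ _ _ h => h) (fun _ _ => card_diag_le' k)
      have h2m : 2 * (CS u v).card ≤ N := by
        have := two_mul_card_le' (fun w : ↥(CS u v) => s(u, (w.1 : Fin n)))
          (fun w => s((w.1 : Fin n), v)) ha hb hab
        simpa [Fintype.card_coe] using this
      have hle1 : (Finset.univ.filter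
          (fun c : Sym2 (Fin n) → Fin k => ∀ w ∈ CS u v, c s(u, w) = c s(w, v))).card
          ≤ k ^ (CS u v).card * k ^ (N - 2 * (CS u v).card) := by
        have hsub1 : (Finset.univ.filter
            (fun c : Sym2 (Fin n) → Fin k => ∀ w ∈ CS u v, c s(u, w) = c s(w, v)))
            ⊆ (Finset.univ.filter (fun c : Sym2 (Fin n) → Fin k =>
              ∀ w : ↥(CS u v), c s(u, (w.1 : Fin n)) = c s((w.1 : Fin n), v))) := by
          intro c hcmem
          simp only [Finset.mem_filter, Finset.mem_univ, true_and] at hcmem ⊢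
          intro w
          exact hcmem w.1 w.2
        refine (Finset.card_le_card hsub1).trans ?_
        have h3 := hcount
        simp only [Fintype.card_coe] at h3
        exact h3
      have hn2m : (n:ℝ)^2 ≤ (k:ℝ)^(CS u v).card := by
        have h1 : (n:ℝ)^2 = (k:ℝ) ^ (2 * Real.logb k n : ℝ) := by
          rw [two_mul, Real.rpow_add hkR0, Real.rpow_logb hkR0 (ne_of_gt hk1) hn0]
          ring
        rw [h1, ← Real.rpow_natCast (k:ℝ) (CS u v).card]
        exact Real.rpow_le_rpow_of_exponent_le hk1.le hm
      calc ((Finset.univ.filter (fun c : Sym2 (Fin n) → Fin k =>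
              ∀ w ∈ CS u v, c s(u, w) = c s(w, v))).card : ℝ)
          ≤ ((k ^ (CS u v).card * k ^ (N - 2 * (CS u v).card) : ℕ) : ℝ) := by
            exact_mod_cast hle1
        _ = (k:ℝ) ^ (CS u v).card * (k:ℝ) ^ (N - 2 * (CS u v).card) := by push_cast; ring
        _ = (k:ℝ)^N / (k:ℝ)^(CS u v).card := by
            rw [eq_div_iff (by positivity : ((k:ℝ)^(CS u v).card) ≠ 0)]
            rw [mul_assoc, ← pow_add, ← pow_add]
            congr 1
            exact nat_id1 _ _ h2m
        _ ≤ (k:ℝ)^N / (n:ℝ)^2 := by gcongr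
    · rw [if_neg hm]
      have hm' : (((CS u v).card : ℝ)) < 2 * Real.logb k n := not_le.mp hm
      have hWadj : ∀ w : ↥(WS u v), G.Adj u w.1 ∧ w.1 ≠ v ∧ ¬ G.Adj w.1 v ∧
          G.Adj w.1 (cn w.1 v) ∧ G.Adj (cn w.1 v) v ∧ cn w.1 v ≠ u :=
        fun w => hWfacts u v hnadj hne w.1 w.2
      have ha2 : Function.Injective (fun w : ↥(WS u v) => s(u, (w.1 : Fin n))) := by
        intro w1 w2 h
        simp only [Sym2.eq_iff] at h
        rcases h with ⟨-, h⟩ | ⟨h1, h2⟩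
        · exact Subtype.ext h
        · exact absurd h2.symm (hWadj w1).1.ne
      have hb2 : Function.Injective
          (fun w : ↥(WS u v) => s((w.1 : Fin n), cn (w.1 : Fin n) v)) := by
        intro w1 w2 h
        simp only [Sym2.eq_iff] at h
        rcases h with ⟨h1, -⟩ | ⟨h1, h2⟩
        · exact Subtype.ext h1
        · have hadjx : G.Adj (cn w2.1 v) v := (hWadj w2).2.2.2.2.1
          rw [← h1] at hadjx
          exact absurd hadjx (hWadj w1).2.2.1
      have hab2 : ∀ w w' : ↥(WS u v),
          s(u, (w.1 : Fin n)) ≠ s((w'.1 : Fin n), cn (w'.1 : Fin n) v) := by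
        intro w w' h
        rw [Sym2.eq_iff] at h
        rcases h with ⟨h1, -⟩ | ⟨h1, -⟩
        · exact absurd h1 (hWadj w').1.ne
        · exact (hWadj w').2.2.2.2.2 h1.symm
      have hQdep : ∀ (w : ↥(WS u v)) (x y : Fin k) (c c' : Sym2 (Fin n) → Fin k),
          (∀ e, (∀ w' : ↥(WS u v), e ≠ s(u, (w'.1 : Fin n)) ∧
            e ≠ s((w'.1 : Fin n), cn (w'.1 : Fin n) v)) → c e = c' e) →
          (x = y ∨ x = c s(cn (w.1 : Fin n) v, v) ∨ y = c s(cn (w.1 : Fin n) v, v)) →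
          (x = y ∨ x = c' s(cn (w.1 : Fin n) v, v) ∨ y = c' s(cn (w.1 : Fin n) v, v)) := by
        intro w x y c c' hagree hQ
        have hce : c s(cn (w.1 : Fin n) v, v) = c' s(cn (w.1 : Fin n) v, v) := by
          apply hagree
          intro w'
          constructor
          · intro h
            rw [Sym2.eq_iff] at h
            rcases h with ⟨h1, -⟩ | ⟨-, h2⟩
            · exact (hWadj w).2.2.2.2.2 h1
            · exact hne h2.symm
          · intro h
            rw [Sym2.eq_iff] at h
            rcases h with ⟨-, h2⟩ | ⟨-, h2⟩
            · exact (hWadj w').2.2.2.2.1.ne h2.symm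
            · exact (hWadj w').2.1 h2.symm
        rcases hQ with h | h | h
        · exact Or.inl h
        · exact Or.inr (Or.inl (hce ▸ h))
        · exact Or.inr (Or.inr (hce ▸ h))
      have hcount := count_bad' (E := Sym2 (Fin n)) (ι := ↥(WS u v)) k (3*k-2) hk0
        (fun w => s(u, (w.1 : Fin n))) (fun w => s((w.1 : Fin n), cn (w.1 : Fin n) v))
        (fun w x y c => x = y ∨ x = c s(cn (w.1 : Fin n) v, v) ∨ y = c s(cn (w.1 : Fin n) v, v))
        ha2 hb2 hab2 hQdep
        (fun w c => card_bad_triple_le' k (c s(cn (w.1 : Fin n) v, v)))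
      have h2t : 2 * (WS u v).card ≤ N := by
        have := two_mul_card_le' (fun w : ↥(WS u v) => s(u, (w.1 : Fin n)))
          (fun w => s((w.1 : Fin n), cn (w.1 : Fin n) v)) ha2 hb2 hab2
        simpa [Fintype.card_coe] using this
      have hle2 : (Finset.univ.filter
          (fun c : Sym2 (Fin n) → Fin k => ∀ w ∈ WS u v,
            c s(u, w) = c s(w, cn w v) ∨ c s(u, w) = c s(cn w v, v)
              ∨ c s(w, cn w v) = c s(cn w v, v))).card
          ≤ (3*k-2) ^ (WS u v).card * k ^ (N - 2 * (WS u v).card) := by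
        have hsub2 : (Finset.univ.filter
            (fun c : Sym2 (Fin n) → Fin k => ∀ w ∈ WS u v,
              c s(u, w) = c s(w, cn w v) ∨ c s(u, w) = c s(cn w v, v)
                ∨ c s(w, cn w v) = c s(cn w v, v)))
            ⊆ (Finset.univ.filter (fun c : Sym2 (Fin n) → Fin k =>
              ∀ w : ↥(WS u v), c s(u, (w.1 : Fin n)) = c s((w.1 : Fin n), cn (w.1 : Fin n) v)
                ∨ c s(u, (w.1 : Fin n)) = c s(cn (w.1 : Fin n) v, v)
                ∨ c s((w.1 : Fin n), cn (w.1 : Fin n) v) = c s(cn (w.1 : Fin n) v, v))) := by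
          intro c hcmem
          simp only [Finset.mem_filter, Finset.mem_univ, true_and] at hcmem ⊢
          intro w
          exact hcmem w.1 w.2
        refine (Finset.card_le_card hsub2).trans ?_
        have h3 := hcount
        simp only [Fintype.card_coe] at h3
        exact h3
      have hdeg : (CS u v).card + (WS u v).card = G.degree u := by
        rw [← SimpleGraph.card_neighborFinset_eq_degree]
        exact Finset.card_inter_add_card_sdiff _ _
      have hδdeg : δ ≤ G.degree u := G.minDegree_le_degree u
      have htR : 2 * Real.logb bR n ≤ ((WS u v).card : ℝ) := by
        have h1 : (δ:ℝ) ≤ ((CS u v).card : ℝ) + ((WS u v).card : ℝ) := by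
          have : δ ≤ (CS u v).card + (WS u v).card := hdeg ▸ hδdeg
          exact_mod_cast this
        linarith
      have hbR0 : (0:ℝ) < bR := lt_trans one_pos hb1
      have hbt : (n:ℝ)^2 ≤ bR ^ (WS u v).card := by
        have h1 : (n:ℝ)^2 = bR ^ (2 * Real.logb bR n : ℝ) := by
          rw [two_mul, Real.rpow_add hbR0, Real.rpow_logb hbR0 (ne_of_gt hb1) hn0]
          ring
        rw [h1, ← Real.rpow_natCast bR ((WS u v).card)]
        exact Real.rpow_le_rpow_of_exponent_le hb1.le htR
      have hc32 : ((3*k-2 : ℕ) : ℝ) = 3*(k:ℝ)-2 := by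
        rw [Nat.cast_sub (nat_id3 k hk)]
        push_cast
        ring
      calc ((Finset.univ.filter
          (fun c : Sym2 (Fin n) → Fin k => ∀ w ∈ WS u v,
            c s(u, w) = c s(w, cn w v) ∨ c s(u, w) = c s(cn w v, v)
              ∨ c s(w, cn w v) = c s(cn w v, v))).card : ℝ)
          ≤ (((3*k-2) ^ (WS u v).card * k ^ (N - 2 * (WS u v).card) : ℕ) : ℝ) := by
            exact_mod_cast hle2
        _ = (3*(k:ℝ)-2) ^ (WS u v).card * (k:ℝ) ^ (N - 2 * (WS u v).card) := by
            rw [Nat.cast_mul, Nat.cast_pow, Nat.cast_pow, hc32]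
        _ = (k:ℝ)^N / bR ^ (WS u v).card := by
            rw [hbR, div_pow, ← pow_mul, div_div_eq_mul_div,
              eq_div_iff (by positivity : ((k:ℝ)^(2 * (WS u v).card)) ≠ 0)]
            rw [mul_assoc, ← pow_add]
            rw [nat_id2 _ _ h2t]
            ring
        _ ≤ (k:ℝ)^N / (n:ℝ)^2 := by gcongr
  have claimB : ∀ c : Sym2 (Fin n) → Fin k, (∀ p ∈ P, c ∉ B p) → IsRainbowConnected G c := by
    intro c hc u v huv
    by_cases hadj : G.Adj u v
    · exact rainbow_path1' hadj c
    · have hpP : (u,v) ∈ P := by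
        rw [hP]
        simp only [Finset.mem_filter, Finset.mem_univ, true_and]
        exact ⟨huv, hadj⟩
      have hnot := hc (u,v) hpP
      rw [hB] at hnot
      beta_reduce at hnot
      by_cases hm : 2 * Real.logb k n ≤ (((CS (u,v).1 (u,v).2).card : ℝ)) 
      · rw [if_pos hm] at hnot
        simp only [Finset.mem_filter, Finset.mem_univ, true_and, not_forall] at hnot
        obtain ⟨w, hwC, hneq⟩ := hnot
        obtain ⟨h1, h2⟩ := hCfacts u v w hwC
        exact rainbow_path2' h1 h2 huv c hneq
      · rw [if_neg hm] at hnot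
        simp only [Finset.mem_filter, Finset.mem_univ, true_and, not_forall] at hnot
        obtain ⟨w, hwW, hbad⟩ := hnot
        push_neg at hbad
        obtain ⟨hauw, hwv, hnwv, hwx, hxv, hxu⟩ := hWfacts u v hadj huv w hwW
        exact rainbow_path3' hauw hwx hxv (Ne.symm hxu) huv hwv c hbad.1 hbad.2.1 hbad.2.2
  suffices hgood : ∃ c, ∀ p ∈ P, c ∉ B p by
    obtain ⟨c, hc⟩ := hgood
    exact ⟨c, claimB c hc⟩
  by_contra hcon
  push_neg at hcon
  have hsub : (Finset.univ : Finset (Sym2 (Fin n) → Fin k)) ⊆ P.biUnion B := by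
    intro c _
    obtain ⟨p, hp, hcp⟩ := hcon c
    exact Finset.mem_biUnion.mpr ⟨p, hp, hcp⟩
  have hcard1 : (k:ℕ)^N ≤ ∑ p ∈ P, (B p).card := by
    calc k^N = Fintype.card (Sym2 (Fin n) → Fin k) := by
          rw [Fintype.card_fun, Fintype.card_fin]
      _ = (Finset.univ : Finset (Sym2 (Fin n) → Fin k)).card := (Finset.card_univ).symm
      _ ≤ (P.biUnion B).card := Finset.card_le_card hsub
      _ ≤ ∑ p ∈ P, (B p).card := Finset.card_biUnion_le
  have hPcard : P.card ≤ n*n - n := by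
    have hsub2 : P ⊆ Finset.univ.offDiag := by
      intro p hp
      rw [hP] at hp
      simp only [Finset.mem_filter, Finset.mem_univ, true_and] at hp
      exact Finset.mem_offDiag.mpr ⟨Finset.mem_univ _, Finset.mem_univ _, hp.1⟩
    calc P.card ≤ _ := Finset.card_le_card hsub2
      _ = n*n - n := by rw [Finset.offDiag_card]; simp
  have hfrac : (0:ℝ) < (k:ℝ)^N / (n:ℝ)^2 := by positivity
  have hsumR : ((k:ℝ)^N) ≤ ∑ p ∈ P, ((B p).card : ℝ) := by
    have := hcard1
    exact_mod_cast this
  have hsum2 : ∑ p ∈ P, ((B p).card : ℝ) ≤ (P.card : ℝ) * ((k:ℝ)^N / (n:ℝ)^2) := by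
    calc ∑ p ∈ P, ((B p).card : ℝ) ≤ ∑ p ∈ P, ((k:ℝ)^N / (n:ℝ)^2) :=
        Finset.sum_le_sum claimA
      _ = (P.card : ℝ) * ((k:ℝ)^N / (n:ℝ)^2) := by rw [Finset.sum_const, nsmul_eq_mul]
  have hPcardR : (P.card : ℝ) ≤ (n:ℝ)*(n:ℝ) - (n:ℝ) := by
    have hle : n ≤ n*n := Nat.le_mul_of_pos_left n (by omega)
    calc (P.card : ℝ) ≤ ((n*n - n : ℕ) : ℝ) := by exact_mod_cast hPcard
      _ = (n:ℝ)*(n:ℝ) - (n:ℝ) := by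
          rw [Nat.cast_sub hle]
          push_cast
          ring
  have hfinal : ((n:ℝ)*(n:ℝ) - (n:ℝ)) * ((k:ℝ)^N / (n:ℝ)^2) < (k:ℝ)^N := by
    have h1 : ((n:ℝ)*(n:ℝ) - (n:ℝ)) < (n:ℝ)^2 := by nlinarith
    calc ((n:ℝ)*(n:ℝ) - (n:ℝ)) * ((k:ℝ)^N / (n:ℝ)^2)
        < (n:ℝ)^2 * ((k:ℝ)^N / (n:ℝ)^2) := by
          apply mul_lt_mul_of_pos_right h1 hfrac
      _ = (k:ℝ)^N := by field_simp
  have : ((k:ℝ)^N) < ((k:ℝ)^N) := by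
    calc ((k:ℝ)^N) ≤ ∑ p ∈ P, ((B p).card : ℝ) := hsumR
      _ ≤ (P.card : ℝ) * ((k:ℝ)^N / (n:ℝ)^2) := hsum2
      _ ≤ ((n:ℝ)*(n:ℝ) - (n:ℝ)) * ((k:ℝ)^N / (n:ℝ)^2) := by
          apply mul_le_mul_of_nonneg_right hPcardR hfrac.le
      _ < (k:ℝ)^N := hfinal
  exact absurd this (lt_irrefl _)
end

section
/- Let k ≥ 2 be an integer and let G be a simple graph on n ≥ 2 vertices such that every pair of distinct non-adjacent vertices of G has at least 2·log_k(n) common neighbors. Then G is connected and rc(G) ≤ k. -/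
open SimpleGraph

lemma card_bad_mul_le {V : Type*} [Fintype V] [DecidableEq V] (k : ℕ) (u v : V)
    (hvu : v ≠ u) (S : Finset V) (hu : ∀ w ∈ S, w ≠ u) :
    (Finset.univ.filter (fun c : Sym2 V → Fin k => ∀ w ∈ S, c s(u,w) = c s(v,w))).card
      * k ^ S.card ≤ k ^ (Fintype.card (Sym2 V)) := by
  classical
  set B := Finset.univ.filter (fun c : Sym2 V → Fin k => ∀ w ∈ S, c s(u,w) = c s(v,w)) with hB
  set T : Finset (Sym2 V) := S.image (fun w => s(u,w)) with hT
  have hTcard : T.card = S.card := by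
    apply Finset.card_image_of_injective
    intro a b hab
    simpa using Sym2.congr_right.mp hab
  have hvT : ∀ w ∈ S, s(v,w) ∉ T := by
    intro w hw hmem
    rw [hT, Finset.mem_image] at hmem
    obtain ⟨w', hw', he⟩ := hmem
    rw [Sym2.eq_iff] at he
    rcases he with ⟨h1, h2⟩ | ⟨h1, h2⟩
    · exact hvu h1.symm
    · exact hu w hw h1.symm
  have key : Fintype.card ({c // c ∈ B} × ({e // e ∈ T} → Fin k))
      ≤ Fintype.card (Sym2 V → Fin k) := by
    apply Fintype.card_le_of_injective (fun p e => if h : e ∈ T then p.2 ⟨e, h⟩ else p.1.1 e)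
    intro p q hpq
    have hfun : ∀ e, (if h : e ∈ T then p.2 ⟨e,h⟩ else p.1.1 e)
        = (if h : e ∈ T then q.2 ⟨e,h⟩ else q.1.1 e) := fun e => congrFun hpq e
    have h2 : p.2 = q.2 := by
      funext e
      have := hfun e.1
      simpa [e.2] using this
    have h1 : p.1 = q.1 := by
      apply Subtype.ext
      funext e
      by_cases he : e ∈ T
      · obtain ⟨w, hw, rfl⟩ := Finset.mem_image.mp he
        have hp := (Finset.mem_filter.mp p.1.2).2 w hw
        have hq := (Finset.mem_filter.mp q.1.2).2 w hw
        have hvw := hvT w hw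
        have hv2 := hfun s(v,w)
        rw [dif_neg hvw, dif_neg hvw] at hv2
        rw [hp, hq, hv2]
      · have := hfun e
        rw [dif_neg he, dif_neg he] at this
        exact this
    exact Prod.ext h1 h2
  simpa [Fintype.card_prod, Fintype.card_coe, Fintype.card_fun, hTcard] using key


/-- If `k ≥ 2` and `G` is a graph on `n ≥ 2` vertices such that every pair of
distinct non-adjacent vertices has at least `2 log_k n` common neighbors, then
`G` is connected and `rc(G) ≤ k`. -/
theorem rc_le_of_common_neighbors (k n : ℕ) (hk : 2 ≤ k) (hn : 2 ≤ n)
    (G : SimpleGraph (Fin n)) [DecidableRel G.Adj]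
    (h : ∀ u v : Fin n, u ≠ v → ¬ G.Adj u v →
      2 * Real.logb k n ≤ ((G.neighborFinset u ∩ G.neighborFinset v).card : ℝ)) :
    G.Connected ∧ ∃ c : Sym2 (Fin n) → Fin k, IsRainbowConnected G c := by
  classical
  have hk1 : (1:ℝ) < (k:ℝ) := by exact_mod_cast lt_of_lt_of_le one_lt_two hk
  have hn0 : (0:ℝ) < (n:ℝ) := by
    have : 0 < n := by omega
    exact_mod_cast this
  set S : Fin n → Fin n → Finset (Fin n) :=
    fun u v => G.neighborFinset u ∩ G.neighborFinset v with hSdef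
  have hmemS : ∀ u v w : Fin n, w ∈ S u v ↔ G.Adj u w ∧ G.Adj v w := by
    intro u v w
    simp [hSdef, Finset.mem_inter, mem_neighborFinset]
  have key : ∀ u v : Fin n, u ≠ v → ¬ G.Adj u v → n ^ 2 ≤ k ^ (S u v).card := by
    intro u v h1 h2
    have ht := h u v h1 h2
    have hreal : ((n:ℝ)) ^ (2:ℕ) ≤ (k:ℝ) ^ ((S u v).card) := by
      have e1 : (k:ℝ) ^ (2 * Real.logb k n) = (n:ℝ) ^ (2:ℕ) := by
        rw [mul_comm, Real.rpow_mul (by positivity),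
          Real.rpow_logb (by positivity) (by norm_num; omega) hn0]
        norm_num
      calc (n:ℝ) ^ (2:ℕ) = (k:ℝ) ^ (2 * Real.logb k n) := e1.symm
        _ ≤ (k:ℝ) ^ (((S u v).card : ℝ)) :=
            Real.rpow_le_rpow_of_exponent_le hk1.le ht
        _ = (k:ℝ) ^ ((S u v).card) := Real.rpow_natCast _ _
    exact_mod_cast hreal
  have hex : ∀ u v : Fin n, u ≠ v → ¬ G.Adj u v → ∃ w, G.Adj u w ∧ G.Adj v w := by
    intro u v h1 h2
    have hK := key u v h1 h2
    have hpos : (S u v).Nonempty := by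
      rw [Finset.nonempty_iff_ne_empty]
      intro he
      rw [he] at hK
      simp at hK
      nlinarith
    obtain ⟨w, hw⟩ := hpos
    rw [hmemS] at hw
    exact ⟨w, hw.1, hw.2⟩
  have hconn : G.Connected := by
    rw [connected_iff]
    refine ⟨?_, ⟨⟨0, by omega⟩⟩⟩
    intro u v
    by_cases huv : u = v
    · subst huv; exact Reachable.refl u
    by_cases hadj : G.Adj u v
    · exact hadj.reachable
    · obtain ⟨w, h1, h2⟩ := hex u v huv hadj
      exact h1.reachable.trans h2.symm.reachable
  have hcol : ∃ c : Sym2 (Fin n) → Fin k, ∀ u v : Fin n, u ≠ v → ¬ G.Adj u v →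
      ∃ w ∈ S u v, c s(u,w) ≠ c s(v,w) := by
    by_contra hcon
    push_neg at hcon
    set P : Finset (Fin n × Fin n) :=
      (Finset.univ.offDiag).filter (fun p => ¬ G.Adj p.1 p.2) with hPdef
    set B : Fin n × Fin n → Finset (Sym2 (Fin n) → Fin k) :=
      fun p => Finset.univ.filter
        (fun c => ∀ w ∈ S p.1 p.2, c s(p.1,w) = c s(p.2,w)) with hBdef
    have hsub : (Finset.univ : Finset (Sym2 (Fin n) → Fin k)) ⊆ P.biUnion B := by
      intro c _
      obtain ⟨u, v, h1, h2, h3⟩ := hcon c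
      rw [Finset.mem_biUnion]
      refine ⟨(u,v), ?_, ?_⟩
      · simp [hPdef, Finset.mem_offDiag, h1, h2]
      · simp only [hBdef, Finset.mem_filter, Finset.mem_univ, true_and]
        exact h3
    set N := Fintype.card (Sym2 (Fin n)) with hNdef
    have htot : (Finset.univ : Finset (Sym2 (Fin n) → Fin k)).card = k ^ N := by
      simp [Finset.card_univ, Fintype.card_fun, hNdef]
    have hle1 : k ^ N ≤ ∑ p ∈ P, (B p).card := by
      calc k ^ N = (Finset.univ : Finset (Sym2 (Fin n) → Fin k)).card := htot.symm
        _ ≤ (P.biUnion B).card := Finset.card_le_card hsub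
        _ ≤ ∑ p ∈ P, (B p).card := Finset.card_biUnion_le
    have hper : ∀ p ∈ P, n ^ 2 * (B p).card ≤ k ^ N := by
      intro p hp
      rw [hPdef, Finset.mem_filter, Finset.mem_offDiag] at hp
      obtain ⟨⟨-, -, hne⟩, hnadj⟩ := hp
      have hK := key p.1 p.2 hne hnadj
      have hb := card_bad_mul_le k p.1 p.2 hne.symm (S p.1 p.2)
        (fun w hw => ((hmemS p.1 p.2 w).mp hw).1.ne')
      calc n ^ 2 * (B p).card ≤ k ^ (S p.1 p.2).card * (B p).card :=
            Nat.mul_le_mul_right _ hK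
        _ = (B p).card * k ^ (S p.1 p.2).card := Nat.mul_comm _ _
        _ ≤ k ^ N := by rw [hNdef, hBdef]; convert hb using 4
    have hPcard : P.card ≤ n * n - n := by
      calc P.card ≤ (Finset.univ : Finset (Fin n)).offDiag.card :=
            Finset.card_le_card (Finset.filter_subset _ _)
        _ = n * n - n := by
            rw [Finset.offDiag_card]
            simp
    have hfinal : n ^ 2 * k ^ N < n ^ 2 * k ^ N := by
      calc n ^ 2 * k ^ N ≤ n ^ 2 * ∑ p ∈ P, (B p).card :=
            Nat.mul_le_mul_left _ hle1
        _ = ∑ p ∈ P, n ^ 2 * (B p).card := Finset.mul_sum _ _ _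
        _ ≤ ∑ p ∈ P, k ^ N := Finset.sum_le_sum hper
        _ = P.card * k ^ N := by rw [Finset.sum_const, smul_eq_mul]
        _ ≤ (n * n - n) * k ^ N := Nat.mul_le_mul_right _ hPcard
        _ < n ^ 2 * k ^ N := by
            have hk0 : 0 < k ^ N := Nat.pow_pos (by omega)
            have h1 : n * n - n < n * n := Nat.sub_lt (by positivity) (by omega)
            have h2 : n * n - n < n ^ 2 := by rw [pow_two]; exact h1
            exact (Nat.mul_lt_mul_right hk0).mpr h2
    exact absurd hfinal (lt_irrefl _)
  obtain ⟨c, hc⟩ := hcol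
  refine ⟨hconn, c, ?_⟩
  intro u v huv
  by_cases hadj : G.Adj u v
  · refine ⟨Walk.cons hadj Walk.nil, ?_, ?_⟩
    · simp [hadj.ne]
    · simp
  · obtain ⟨w, hw, hne⟩ := hc u v huv hadj
    rw [hmemS] at hw
    obtain ⟨huw, hvw⟩ := hw
    refine ⟨Walk.cons huw (Walk.cons hvw.symm Walk.nil), ?_, ?_⟩
    · simp [huw.ne, hvw.ne', huv, Walk.cons_isPath_iff]
    · simp only [Walk.edges_cons, Walk.edges_nil, List.map_cons, List.map_nil]
      rw [Sym2.eq_swap (a := w) (b := v)]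
      simp [hne]
end
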